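/- arXiv:1105.6046 — 9 statements merged into one kernel-verified Lean document; each statement's English description precedes it below -/
import Mathlib

section
/- Let X be a real Banach space with separable dual X* and let {(x_i, x_i*)}_{i∈ℕ} be a shrinking M-basis of X. Let W ⊂ X be a closed convex bounded set with non-empty interior such that 0 ∈ int(W), and let 0 < ε < 1/8. Then there exists a weak-* compact subset F ⊂ W° such that: (1) (1/(1+4ε))·W° ⊆ weak-* closed convex hull of F ⊆ (1/(1+ε))·W°; and (2) for each i ∈ ℕ the set {f(x_i) : f ∈ F} is finite. -/
open Filter Topology Pointwise

set_option maxHeartbeats 1000000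

private lemma polar_convex' {X : Type*} [NormedAddCommGroup X] [NormedSpace ℝ X] (W : Set X) :
    Convex ℝ (StrongDual.polar ℝ W) := by
  intro f hf g hg a b ha hb hab
  rw [StrongDual.mem_polar_iff] at *
  intro z hz
  have hf' := hf z hz
  have hg' := hg z hz
  have heq : (a • f + b • g) z = a • f z + b • g z := by
    simp [ContinuousLinearMap.add_apply, ContinuousLinearMap.smul_apply]
  rw [heq]
  have h1 : ‖a • f z + b • g z‖ ≤ ‖a • f z‖ + ‖b • g z‖ := norm_add_le _ _
  have h2 : ‖a • f z‖ = a * ‖f z‖ := by rw [norm_smul, Real.norm_of_nonneg ha]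
  have h3 : ‖b • g z‖ = b * ‖g z‖ := by rw [norm_smul, Real.norm_of_nonneg hb]
  nlinarith [norm_nonneg (f z), norm_nonneg (g z)]

private lemma round_mem_convexHull' {E : Type*} [AddCommGroup E] [Module ℝ E]
    (v : ℕ → E) (δ : ℕ → ℝ) (hδ : ∀ i, 0 < δ i) (a : ℕ → ℝ) (s : Finset ℕ) :
    (∑ i ∈ s, a i • v i) ∈ convexHull ℝ
      {q : E | ∃ b : ℕ → ℝ, (∀ i ∈ s, (∃ k : ℤ, b i = δ i * k) ∧ |b i - a i| ≤ δ i)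
        ∧ q = ∑ i ∈ s, b i • v i} := by
  classical
  induction s using Finset.induction with
  | empty => exact subset_convexHull _ _ ⟨0, by simp, by simp⟩
  | @insert j s hj ih =>
    rw [Finset.sum_insert hj]
    set glo : ℝ := δ j * ⌊a j / δ j⌋ with hglo
    set ghi : ℝ := δ j * (⌊a j / δ j⌋ + 1) with hghi
    have hδj := hδ j
    have hhl : ghi - glo = δ j := by rw [hghi, hglo]; ring
    have hlo_le : glo ≤ a j := by
      rw [hglo]
      have := Int.floor_le (a j / δ j)
      calc δ j * ⌊a j / δ j⌋ ≤ δ j * (a j / δ j) := by gcongr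
        _ = a j := by field_simp
    have hle_hi : a j ≤ ghi := by
      rw [hghi]
      have := (Int.lt_floor_add_one (a j / δ j)).le
      calc a j = δ j * (a j / δ j) := by field_simp
        _ ≤ δ j * (⌊a j / δ j⌋ + 1) := by gcongr
    have hseg : a j • v j ∈ convexHull ℝ ({glo • v j, ghi • v j} : Set E) := by
      rw [convexHull_pair]
      refine ⟨(ghi - a j) / δ j, (a j - glo) / δ j,
        div_nonneg (by linarith) hδj.le, div_nonneg (by linarith) hδj.le, ?_, ?_⟩
      · field_simp
        linarith
      · rw [smul_smul, smul_smul, ← add_smul]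
        congr 1
        field_simp
        linear_combination (a j) * hhl
    have hmem := Set.add_mem_add hseg ih
    rw [← convexHull_add] at hmem
    refine convexHull_mono ?_ hmem
    rw [Set.add_subset_iff]
    rintro w hw q ⟨b, hb, rfl⟩
    have main : ∀ c : ℝ, (∃ k : ℤ, c = δ j * k) → |c - a j| ≤ δ j →
        (c • v j + ∑ i ∈ s, b i • v i) ∈
          {q : E | ∃ b' : ℕ → ℝ, (∀ i ∈ insert j s,
              (∃ k : ℤ, b' i = δ i * k) ∧ |b' i - a i| ≤ δ i)
            ∧ q = ∑ i ∈ insert j s, b' i • v i} := by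
      intro c hcg hcd
      refine ⟨Function.update b j c, ?_, ?_⟩
      · intro i hi'
        by_cases hij : i = j
        · subst hij; rw [Function.update_self]; exact ⟨hcg, hcd⟩
        · rw [Function.update_of_ne hij]
          exact hb i ((Finset.mem_insert.1 hi').resolve_left hij)
      · rw [Finset.sum_insert hj, Function.update_self]
        congr 1
        refine Finset.sum_congr rfl fun i his => ?_
        rw [Function.update_of_ne (by rintro rfl; exact hj his)]
    rcases hw with hw | hw
    · rw [hw]
      exact main glo ⟨⌊a j / δ j⌋, hglo⟩ (abs_le.2 ⟨by linarith, by linarith⟩)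
    · rw [Set.mem_singleton_iff.1 hw]
      refine main ghi ⟨⌊a j / δ j⌋ + 1, by rw [hghi]; push_cast; ring⟩
        (abs_le.2 ⟨by linarith, by linarith⟩)


/-- `{(x i, xs i)}` is an M-basis of `X`: a biorthogonal system whose vectors have dense
linear span in `X` and whose functionals have weak-* dense linear span in `X*`. -/
def IsMBasis {X : Type*} [NormedAddCommGroup X] [NormedSpace ℝ X]
    (x : ℕ → X) (xs : ℕ → StrongDual ℝ X) : Prop :=
  (∀ i j : ℕ, xs i (x j) = if i = j then 1 else 0) ∧
  closure ((Submodule.span ℝ (Set.range x) : Submodule ℝ X) : Set X) = Set.univ ∧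
  closure (StrongDual.toWeakDual ''
      ((Submodule.span ℝ (Set.range xs) : Submodule ℝ (StrongDual ℝ X)) :
        Set (StrongDual ℝ X))) = Set.univ

/-- A shrinking M-basis: an M-basis whose functionals have norm-dense linear span in `X*`. -/
def IsShrinkingMBasis {X : Type*} [NormedAddCommGroup X] [NormedSpace ℝ X]
    (x : ℕ → X) (xs : ℕ → StrongDual ℝ X) : Prop :=
  IsMBasis x xs ∧
  closure ((Submodule.span ℝ (Set.range xs) : Submodule ℝ (StrongDual ℝ X)) :
      Set (StrongDual ℝ X)) = Set.univ

/-- Given a CCB body `W` with `0 ∈ int W` in a Banach space with separable dual and a shrinking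
M-basis, there is a weak-* compact `F ⊆ W°` with
`(1/(1+4ε)) W° ⊆ weak-* closed convex hull of F ⊆ (1/(1+ε)) W°` whose evaluations at each
basis vector `x i` form a finite set. -/
theorem exists_weakStarCompact_approximating_polar
    {X : Type*} [NormedAddCommGroup X] [NormedSpace ℝ X] [CompleteSpace X]
    [TopologicalSpace.SeparableSpace (StrongDual ℝ X)]
    (x : ℕ → X) (xs : ℕ → StrongDual ℝ X) (hbasis : IsShrinkingMBasis x xs)
    (W : Set X) (hWclosed : IsClosed W) (hWconv : Convex ℝ W)
    (hWbdd : Bornology.IsBounded W) (hW0 : (0 : X) ∈ interior W)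
    (ε : ℝ) (hε : 0 < ε) (hε' : ε < 1 / 8) :
    ∃ F : Set (StrongDual ℝ X),
      F ⊆ StrongDual.polar ℝ W ∧
      IsCompact (StrongDual.toWeakDual '' F) ∧
      StrongDual.toWeakDual '' ((1 / (1 + 4 * ε)) • StrongDual.polar ℝ W) ⊆
        closure (convexHull ℝ (StrongDual.toWeakDual '' F)) ∧
      closure (convexHull ℝ (StrongDual.toWeakDual '' F)) ⊆
        StrongDual.toWeakDual '' ((1 / (1 + ε)) • StrongDual.polar ℝ W) ∧
      ∀ i : ℕ, ((fun f : StrongDual ℝ X => f (x i)) '' F).Finite := by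
  classical
  obtain ⟨⟨hbio, -, -⟩, hshr⟩ := hbasis
  have hWnhds : W ∈ 𝓝 (0 : X) := mem_interior_iff_mem_nhds.1 hW0
  obtain ⟨r, hr0, hball⟩ := Metric.mem_nhds_iff.1 hWnhds
  obtain ⟨R', hR'⟩ := (Metric.isBounded_iff_subset_closedBall 0).1 hWbdd
  set R : ℝ := max R' 1 with hRdef
  have hR0 : (0:ℝ) < R := lt_of_lt_of_le one_pos (le_max_right _ _)
  have hWR : W ⊆ Metric.closedBall 0 R :=
    hR'.trans (Metric.closedBall_subset_closedBall (le_max_left _ _))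
  set c1 : ℝ := 1 / (1 + 4 * ε) with hc1
  set c : ℝ := 1 / (1 + ε) with hc
  have h1ε : (0:ℝ) < 1 + ε := by linarith
  have h4ε : (0:ℝ) < 1 + 4 * ε := by linarith
  have hc0 : 0 < c := by rw [hc]; positivity
  have hc10 : 0 < c1 := by rw [hc1]; positivity
  have hcle1 : c ≤ 1 := by rw [hc, div_le_one h1ε]; linarith
  set t : ℝ := c - c1 with ht
  have ht0 : 0 < t := by
    rw [ht, hc, hc1]
    have : 1 / (1 + 4*ε) < 1 / (1 + ε) := by
      apply one_div_lt_one_div_of_lt h1ε; linarith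
    linarith
  set δ : ℕ → ℝ := fun i => t / (4 * R) * (1/2)^i / (1 + ‖xs i‖) with hδdef
  have hδ : ∀ i, 0 < δ i := fun i => by
    have := norm_nonneg (xs i); rw [hδdef]; positivity
  set Grid : ℕ → Set ℝ := fun i => {u : ℝ | ∃ k : ℤ, u = δ i * k} with hGrid
  set F : Set (StrongDual ℝ X) :=
    {f | f ∈ c • StrongDual.polar ℝ W ∧ ∀ i, f (x i) ∈ Grid i} with hF
  -- basic polar facts
  have hpolar_ballsub : Metric.closedBall (0 : StrongDual ℝ X) R⁻¹ ⊆
      StrongDual.polar ℝ W := by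
    intro f hf
    rw [StrongDual.mem_polar_iff]
    intro z hz
    have hz' : ‖z‖ ≤ R := by simpa using hWR hz
    have hf' : ‖f‖ ≤ R⁻¹ := by simpa using hf
    calc ‖f z‖ ≤ ‖f‖ * ‖z‖ := f.le_opNorm z
      _ ≤ R⁻¹ * R := by gcongr
      _ = 1 := inv_mul_cancel₀ hR0.ne'
  have hpolar_norm : ∀ f ∈ StrongDual.polar ℝ W, ‖f‖ ≤ r⁻¹ := by
    intro f hf
    have h1 : f ∈ StrongDual.polar ℝ (Metric.ball (0:X) r) := by
      rw [StrongDual.mem_polar_iff] at hf ⊢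
      exact fun z hz => hf z (hball hz)
    rw [NormedSpace.polar_ball hr0] at h1
    simpa using h1
  have hFsub : F ⊆ StrongDual.polar ℝ W := by
    rintro f ⟨⟨g, hg, rfl⟩, -⟩
    rw [StrongDual.mem_polar_iff] at hg ⊢
    intro z hz
    have h1 : (c • g) z = c • (g z) := rfl
    rw [h1, smul_eq_mul, norm_mul, Real.norm_of_nonneg hc0.le]
    have := hg z hz
    nlinarith [norm_nonneg (g z)]
  -- key density fact
  have hkey : ∀ g ∈ StrongDual.polar ℝ W, c1 • g ∈ closure (convexHull ℝ F) := by
    intro g hg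
    rw [Metric.mem_closure_iff]
    intro η hη
    set η' : ℝ := min (η/2) (t/(2*R)) with hη'def
    have hη'0 : 0 < η' := lt_min (by linarith) (by positivity)
    have hfc : c1 • g ∈ closure
        ((Submodule.span ℝ (Set.range xs) : Submodule ℝ (StrongDual ℝ X)) :
          Set (StrongDual ℝ X)) := by rw [hshr]; trivial
    obtain ⟨p, hpspan, hpdist⟩ := Metric.mem_closure_iff.1 hfc η' hη'0
    obtain ⟨d, hd⟩ := Finsupp.mem_span_range_iff_exists_finsupp.1 hpspan
    rw [Finsupp.sum] at hd
    have hround := round_mem_convexHull' xs δ hδ d d.support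
    -- geometric sum bound
    have hsumδ : ∑ i ∈ d.support, δ i * ‖xs i‖ ≤ t/(2*R) := by
      have h1 : ∀ i ∈ d.support, δ i * ‖xs i‖ ≤ t/(4*R) * (1/2)^i := by
        intro i _
        have hn : (0:ℝ) ≤ ‖xs i‖ := norm_nonneg _
        have hA : (0:ℝ) ≤ t/(4*R) * (1/2:ℝ)^i := by positivity
        rw [hδdef]
        rw [div_mul_eq_mul_div, div_le_iff₀ (by positivity : (0:ℝ) < 1 + ‖xs i‖)]
        nlinarith
      have hsub : d.support ⊆ Finset.range (d.support.sup id + 1) := by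
        intro i hi
        exact Finset.mem_range.2 (Nat.lt_succ_of_le (Finset.le_sup (f := id) hi))
      calc ∑ i ∈ d.support, δ i * ‖xs i‖
          ≤ ∑ i ∈ d.support, t/(4*R) * (1/2)^i := Finset.sum_le_sum h1
        _ ≤ ∑ i ∈ Finset.range (d.support.sup id + 1), t/(4*R) * (1/2)^i :=
            Finset.sum_le_sum_of_subset_of_nonneg hsub (fun i _ _ => by positivity)
        _ = t/(4*R) * ∑ i ∈ Finset.range (d.support.sup id + 1), (1/2)^i := by
            rw [Finset.mul_sum]
        _ ≤ t/(4*R) * 2 := by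
            have := sum_geometric_two_le (d.support.sup id + 1)
            have h40 : (0:ℝ) ≤ t/(4*R) := by positivity
            nlinarith
        _ = t/(2*R) := by field_simp; ring
    -- the vertex set maps into F
    have hVF : {q : StrongDual ℝ X | ∃ b : ℕ → ℝ,
        (∀ i ∈ d.support, (∃ k : ℤ, b i = δ i * k) ∧ |b i - d i| ≤ δ i)
        ∧ q = ∑ i ∈ d.support, b i • xs i} ⊆ F := by
      rintro q ⟨b, hb, rfl⟩
      have hqx : ∀ i, (∑ j ∈ d.support, b j • xs j) (x i) =
          if i ∈ d.support then b i else 0 := by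
        intro i
        have h2 : (∑ j ∈ d.support, b j • xs j) (x i) =
            ∑ j ∈ d.support, b j * (xs j (x i)) := by
          simp [ContinuousLinearMap.sum_apply, ContinuousLinearMap.smul_apply]
        rw [h2]
        rw [Finset.sum_congr rfl (fun j _ => by rw [hbio j i])]
        simp [mul_ite, mul_one, mul_zero, Finset.sum_ite_eq']
      have hqp : ‖(∑ i ∈ d.support, b i • xs i) - ∑ i ∈ d.support, d i • xs i‖
          ≤ t/(2*R) := by
        rw [← Finset.sum_sub_distrib]
        calc ‖∑ i ∈ d.support, (b i • xs i - d i • xs i)‖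
            ≤ ∑ i ∈ d.support, ‖b i • xs i - d i • xs i‖ := norm_sum_le _ _
          _ = ∑ i ∈ d.support, |b i - d i| * ‖xs i‖ := by
              refine Finset.sum_congr rfl fun i _ => ?_
              rw [(sub_smul (b i) (d i) (xs i)).symm, norm_smul, Real.norm_eq_abs]
          _ ≤ ∑ i ∈ d.support, δ i * ‖xs i‖ := Finset.sum_le_sum fun i hi =>
              mul_le_mul_of_nonneg_right (hb i hi).2 (norm_nonneg _)
          _ ≤ t/(2*R) := hsumδ
      have hpf : ‖(∑ i ∈ d.support, d i • xs i) - c1 • g‖ < η' := by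
        rw [hd, ← dist_eq_norm, dist_comm]
        exact hpdist
      have hqf : ‖(∑ i ∈ d.support, b i • xs i) - c1 • g‖ ≤ t / R := by
        have h3 : (∑ i ∈ d.support, b i • xs i) - c1 • g =
            ((∑ i ∈ d.support, b i • xs i) - ∑ i ∈ d.support, d i • xs i) +
            ((∑ i ∈ d.support, d i • xs i) - c1 • g) := by abel
        rw [h3]
        have h4 := norm_add_le ((∑ i ∈ d.support, b i • xs i) - ∑ i ∈ d.support, d i • xs i)
          ((∑ i ∈ d.support, d i • xs i) - c1 • g)
        have h5 : η' ≤ t/(2*R) := min_le_right _ _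
        have h6 : t/(2*R) + t/(2*R) = t/R := by field_simp; ring
        linarith
      constructor
      · -- membership in c • polar
        set q := ∑ i ∈ d.support, b i • xs i with hq
        set h : StrongDual ℝ X := t⁻¹ • (q - c1 • g) with hh
        have hhmem : h ∈ StrongDual.polar ℝ W := by
          apply hpolar_ballsub
          rw [mem_closedBall_zero_iff, hh, norm_smul, Real.norm_of_nonneg (inv_nonneg.2 ht0.le)]
          calc t⁻¹ * ‖q - c1 • g‖ ≤ t⁻¹ * (t/R) := by gcongr
            _ = R⁻¹ := by field_simp
        refine Set.mem_smul_set.2 ⟨(c1/c) • g + (t/c) • h, ?_, ?_⟩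
        · apply polar_convex' W hg hhmem (div_nonneg hc10.le hc0.le) (div_nonneg ht0.le hc0.le)
          rw [← add_div, ht]
          field_simp
          ring
        · rw [smul_add, smul_smul, smul_smul]
          have e1 : c * (c1/c) = c1 := by field_simp
          have e2 : c * (t/c) = t := by field_simp
          rw [e1, e2, hh, smul_inv_smul₀ ht0.ne']
          abel
      · -- grid membership
        intro i
        rw [hqx i]
        by_cases hmem : i ∈ d.support
        · rw [if_pos hmem]; exact (hb i hmem).1
        · rw [if_neg hmem]; exact ⟨0, by simp⟩
    refine ⟨∑ i ∈ d.support, d i • xs i, convexHull_mono hVF hround, ?_⟩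
    rw [hd]
    exact lt_of_lt_of_le hpdist ((min_le_left _ _).trans (by linarith))
  -- images under toWeakDual
  have himgpolar : StrongDual.toWeakDual '' StrongDual.polar ℝ W =
      WeakDual.polar ℝ W := by
    rw [StrongDual.toWeakDual.image_eq_preimage_symm]
    rfl
  have himgsmul : StrongDual.toWeakDual '' (c • StrongDual.polar ℝ W) =
      c • (StrongDual.toWeakDual '' StrongDual.polar ℝ W) := by
    ext φ
    simp only [Set.mem_image, Set.mem_smul_set]
    constructor
    · rintro ⟨f, ⟨g, hg, rfl⟩, rfl⟩
      exact ⟨StrongDual.toWeakDual g, ⟨g, hg, rfl⟩,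
        (map_smul StrongDual.toWeakDual c g).symm⟩
    · rintro ⟨ψ, ⟨g, hg, rfl⟩, rfl⟩
      exact ⟨c • g, ⟨g, hg, rfl⟩, map_smul StrongDual.toWeakDual c g⟩
  have hTcompact : IsCompact (StrongDual.toWeakDual '' (c • StrongDual.polar ℝ W)) := by
    rw [himgsmul, himgpolar]
    exact (WeakDual.isCompact_polar ℝ hWnhds).smul c
  refine ⟨F, hFsub, ?_, ?_, ?_, ?_⟩
  · -- compactness
    have himg : StrongDual.toWeakDual '' F =
        (StrongDual.toWeakDual '' (c • StrongDual.polar ℝ W)) ∩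
          {φ : WeakDual ℝ X | ∀ i, φ (x i) ∈ Grid i} := by
      ext φ
      simp only [Set.mem_image, Set.mem_inter_iff, Set.mem_setOf_eq, hF]
      constructor
      · rintro ⟨f, ⟨hf1, hf2⟩, rfl⟩
        exact ⟨⟨f, hf1, rfl⟩, hf2⟩
      · rintro ⟨⟨f, hf1, rfl⟩, h2⟩
        exact ⟨f, ⟨hf1, fun i => h2 i⟩, rfl⟩
    rw [himg]
    apply hTcompact.inter_right
    have hset : {φ : WeakDual ℝ X | ∀ i, φ (x i) ∈ Grid i} =
        ⋂ i, (fun φ : WeakDual ℝ X => φ (x i)) ⁻¹' (Grid i) := by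
      ext φ; simp
    rw [hset]
    refine isClosed_iInter fun i => IsClosed.preimage (WeakDual.eval_continuous (x i)) ?_
    have hGi : Grid i = (fun u : ℝ => u / δ i) ⁻¹' (Set.range ((↑) : ℤ → ℝ)) := by
      ext u
      simp only [hGrid, Set.mem_setOf_eq, Set.mem_preimage, Set.mem_range]
      constructor
      · rintro ⟨k, rfl⟩
        exact ⟨k, by have := (hδ i).ne'; field_simp [mul_comm]⟩
      · rintro ⟨k, hk⟩
        refine ⟨k, ?_⟩
        rw [hk]
        have := (hδ i).ne'
        field_simp
    rw [hGi]
    exact IsClosed.preimage (continuous_id.div_const _)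
      Int.isClosedEmbedding_coe_real.isClosed_range
  · -- lower inclusion
    rintro φ ⟨f, hf, rfl⟩
    obtain ⟨g, hg, rfl⟩ := hf
    have h1 := hkey g hg
    have h2 : StrongDual.toWeakDual (c1 • g) ∈
        closure (StrongDual.toWeakDual '' (convexHull ℝ F)) :=
      image_closure_subset_closure_image NormedSpace.Dual.toWeakDual_continuous ⟨_, h1, rfl⟩
    have h3 : StrongDual.toWeakDual '' (convexHull ℝ F) =
        convexHull ℝ (StrongDual.toWeakDual '' F) := by
      rw [show (⇑(StrongDual.toWeakDual (𝕜 := ℝ) (E := X))) =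
        ⇑(StrongDual.toWeakDual (𝕜 := ℝ) (E := X)).toLinearMap from rfl,
        LinearMap.image_convexHull]
    rwa [h3] at h2
  · -- upper inclusion
    have hTconvex : Convex ℝ (StrongDual.toWeakDual '' (c • StrongDual.polar ℝ W)) := by
      have h1 : Convex ℝ (c • StrongDual.polar ℝ W) := (polar_convex' W).smul c
      exact h1.linear_image StrongDual.toWeakDual.toLinearMap
    have hTclosed : IsClosed (StrongDual.toWeakDual '' (c • StrongDual.polar ℝ W)) :=
      hTcompact.isClosed
    apply closure_minimal _ hTclosed
    apply convexHull_min _ hTconvex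
    apply Set.image_mono
    exact fun f hf => hf.1
  · -- finiteness
    intro i
    set M : ℝ := r⁻¹ * ‖x i‖ with hM
    have hbound : ∀ f ∈ F, |f (x i)| ≤ M := by
      rintro f ⟨⟨g, hg, rfl⟩, -⟩
      have hg' := hpolar_norm g hg
      have h1 : ‖(c • g) (x i)‖ ≤ ‖c • g‖ * ‖x i‖ := (c • g).le_opNorm (x i)
      have h2 : ‖c • g‖ = c * ‖g‖ := by rw [norm_smul, Real.norm_of_nonneg hc0.le]
      show |(c • g) (x i)| ≤ M
      rw [← Real.norm_eq_abs, hM]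
      calc ‖(c • g) (x i)‖ ≤ ‖c • g‖ * ‖x i‖ := h1
        _ = c * ‖g‖ * ‖x i‖ := by rw [h2]
        _ ≤ 1 * r⁻¹ * ‖x i‖ := by
            apply mul_le_mul_of_nonneg_right _ (norm_nonneg _)
            exact mul_le_mul hcle1 hg' (norm_nonneg _) one_pos.le
        _ = r⁻¹ * ‖x i‖ := by ring
    have hfin : Set.Finite ((fun k : ℤ => δ i * k) '' {k : ℤ | |(k:ℝ)| ≤ M / δ i}) := by
      apply Set.Finite.image
      apply Set.Finite.subset (Set.finite_Icc (-(⌈M / δ i⌉)) ⌈M / δ i⌉)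
      intro k hk
      simp only [Set.mem_setOf_eq] at hk
      rw [Set.mem_Icc]
      have h1 : ((|k| : ℤ) : ℝ) ≤ M / δ i := by rwa [Int.cast_abs]
      have h2 : |k| ≤ ⌈M / δ i⌉ := by
        have h6 := Int.le_ceil (M / δ i)
        exact_mod_cast h1.trans h6
      exact abs_le.1 h2
    apply hfin.subset
    rintro y ⟨f, hfF, rfl⟩
    obtain ⟨k, hk⟩ := hfF.2 i
    refine ⟨k, ?_, hk.symm⟩
    simp only [Set.mem_setOf_eq]
    rw [le_div_iff₀ (hδ i)]
    have h7 := hbound f hfF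
    rw [hk, abs_mul, abs_of_pos (hδ i)] at h7
    linarith [mul_comm |(k:ℝ)| (δ i)]
end

section
/- Let (X, ‖·‖) be a real Banach space whose norm is C^k-smooth, k ∈ ℕ ∪ {∞}, let (x_i*)_{i∈ℕ} be a sequence in X*, and let (c_i)_{i∈ℕ} be positive reals with Σ_i c_i ‖x_i*‖² < ∞. For ε > 0 define |||x|||² = ‖x‖² + ε Σ_{i=1}^∞ c_i (x_i*(x))². Then |||·||| is an equivalent norm on X, the function x ↦ |||x|||² is k-times continuously Fréchet differentiable on X ∖ {0}, |||·||| is C^k-smooth, and |||·||| → ‖·‖ uniformly on bounded sets as ε → 0⁺: namely 0 ≤ |||x||| − ‖x‖ ≤ ‖x‖·(√(1 + ε Σ_i c_i ‖x_i*‖²) − 1) for all x ∈ X. -/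
open Filter Topology
set_option maxHeartbeats 1000000

/-- `N` is a norm on the real vector space `X`. -/
def IsNorm {X : Type*} [AddCommGroup X] [Module ℝ X] (N : X → ℝ) : Prop :=
  (∀ x y : X, N (x + y) ≤ N x + N y) ∧
  (∀ (c : ℝ) (x : X), N (c • x) = |c| * N x) ∧
  (∀ x : X, N x = 0 → x = 0)

/-- `N` is equivalent to the canonical norm of `X`. -/
def IsEquivNorm {X : Type*} [NormedAddCommGroup X] [NormedSpace ℝ X] (N : X → ℝ) : Prop :=
  ∃ c C : ℝ, 0 < c ∧ 0 < C ∧ ∀ x : X, c * ‖x‖ ≤ N x ∧ N x ≤ C * ‖x‖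

lemma auxB {X Y : Type*} [NormedAddCommGroup X] [NormedSpace ℝ X]
    [NormedAddCommGroup Y] [NormedSpace ℝ Y] [CompleteSpace Y]
    (T : ℕ → X →L[ℝ] Y) (h : Summable fun i => ‖T i‖) :
    ∃ B : X →L[ℝ] Y, ∀ x, B x = ∑' i, T i x := by
  have hT : Summable T := Summable.of_norm h
  exact ⟨∑' i, T i, fun x => (ContinuousLinearMap.apply ℝ Y x).map_tsum hT⟩

lemma auxSum {X Y : Type*} [NormedAddCommGroup X] [NormedSpace ℝ X]
    [NormedAddCommGroup Y] [NormedSpace ℝ Y] [CompleteSpace Y]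
    (T : ℕ → X →L[ℝ] Y) (h : Summable fun i => ‖T i‖) (x : X) :
    Summable fun i => T i x :=
  Summable.of_norm (Summable.of_nonneg_of_le (fun i => norm_nonneg _)
    (fun i => (T i).le_opNorm x) (h.mul_right ‖x‖))

/-- The quadratic perturbation `|||x|||² = ‖x‖² + ε Σᵢ cᵢ (xᵢ*(x))²` of a `C^k`-smooth norm
is an equivalent norm, `|||·|||²` is `C^k`-smooth away from the origin, `|||·|||` is a
`C^k`-smooth norm, and it approximates `‖·‖` uniformly on bounded sets as `ε → 0⁺`. -/
theorem quadratic_perturbation_of_smooth_norm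
    {X : Type*} [NormedAddCommGroup X] [NormedSpace ℝ X] [CompleteSpace X]
    (k : ℕ∞)
    (hsmooth : ContDiffOn ℝ k (fun z : X => ‖z‖) {(0 : X)}ᶜ)
    (xs : ℕ → StrongDual ℝ X)
    (c : ℕ → ℝ) (hc : ∀ i : ℕ, 0 < c i)
    (hsum : Summable fun i : ℕ => c i * ‖xs i‖ ^ 2)
    (ε : ℝ) (hε : 0 < ε)
    (N : X → ℝ)
    (hN : ∀ z : X, N z = Real.sqrt (‖z‖ ^ 2 + ε * ∑' i : ℕ, c i * (xs i z) ^ 2)) :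
    IsNorm N ∧ IsEquivNorm N ∧
      ContDiffOn ℝ k (fun z : X => N z ^ 2) {(0 : X)}ᶜ ∧
      ContDiffOn ℝ k N {(0 : X)}ᶜ ∧
      ∀ z : X, 0 ≤ N z - ‖z‖ ∧
        N z - ‖z‖ ≤ ‖z‖ * (Real.sqrt (1 + ε * ∑' i : ℕ, c i * ‖xs i‖ ^ 2) - 1) := by
  -- basic summability estimates
  have hb : ∀ (x : X) (i : ℕ), (xs i x) ^ 2 ≤ ‖xs i‖ ^ 2 * ‖x‖ ^ 2 := by
    intro x i
    have h0 : |xs i x| ≤ ‖xs i‖ * ‖x‖ := by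
      simpa [Real.norm_eq_abs] using (xs i).le_opNorm x
    calc (xs i x) ^ 2 = |xs i x| ^ 2 := (sq_abs _).symm
      _ ≤ (‖xs i‖ * ‖x‖) ^ 2 := by nlinarith [abs_nonneg (xs i x)]
      _ = ‖xs i‖ ^ 2 * ‖x‖ ^ 2 := by ring
  have hterm : ∀ (x : X) (i : ℕ), c i * (xs i x) ^ 2 ≤ c i * ‖xs i‖ ^ 2 * ‖x‖ ^ 2 := by
    intro x i
    calc c i * (xs i x) ^ 2 ≤ c i * (‖xs i‖ ^ 2 * ‖x‖ ^ 2) :=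
          mul_le_mul_of_nonneg_left (hb x i) (hc i).le
      _ = c i * ‖xs i‖ ^ 2 * ‖x‖ ^ 2 := by ring
  have hsx : ∀ x : X, Summable fun i => c i * (xs i x) ^ 2 := fun x =>
    Summable.of_nonneg_of_le (fun i => mul_nonneg (hc i).le (sq_nonneg _))
      (fun i => hterm x i) (hsum.mul_right (‖x‖ ^ 2))
  set S := ∑' i : ℕ, c i * ‖xs i‖ ^ 2 with hSdef
  have hS0 : 0 ≤ S := tsum_nonneg fun i => mul_nonneg (hc i).le (sq_nonneg _)
  set g : X → ℝ := fun x => ∑' i, c i * (xs i x) ^ 2 with hgdef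
  have hg0 : ∀ x, 0 ≤ g x := fun x => tsum_nonneg fun i => mul_nonneg (hc i).le (sq_nonneg _)
  have hgS : ∀ x, g x ≤ S * ‖x‖ ^ 2 := by
    intro x
    calc g x ≤ ∑' i, c i * ‖xs i‖ ^ 2 * ‖x‖ ^ 2 :=
          Summable.tsum_le_tsum (fun i => hterm x i) (hsx x) (hsum.mul_right _)
      _ = S * ‖x‖ ^ 2 := by rw [tsum_mul_right]
  have hA0 : ∀ x : X, (0 : ℝ) ≤ ‖x‖ ^ 2 + ε * g x := fun x =>
    add_nonneg (sq_nonneg _) (mul_nonneg hε.le (hg0 x))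
  have hNg : ∀ x : X, N x = Real.sqrt (‖x‖ ^ 2 + ε * g x) := fun x => hN x
  have hNsq : ∀ x : X, N x ^ 2 = ‖x‖ ^ 2 + ε * g x := fun x => by
    rw [hNg x, Real.sq_sqrt (hA0 x)]
  have hN0 : ∀ x : X, 0 ≤ N x := fun x => by rw [hNg x]; exact Real.sqrt_nonneg _
  -- lower bound
  have hlow : ∀ x : X, ‖x‖ ≤ N x := by
    intro x
    rw [hNg x]
    calc ‖x‖ = Real.sqrt (‖x‖ ^ 2) := (Real.sqrt_sq (norm_nonneg x)).symm
      _ ≤ _ := Real.sqrt_le_sqrt (by nlinarith [mul_nonneg hε.le (hg0 x)])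
  -- upper bound
  have hup : ∀ x : X, N x ≤ Real.sqrt (1 + ε * S) * ‖x‖ := by
    intro x
    rw [hNg x]
    have h1 : ‖x‖ ^ 2 + ε * g x ≤ (1 + ε * S) * ‖x‖ ^ 2 := by
      nlinarith [mul_le_mul_of_nonneg_left (hgS x) hε.le]
    calc Real.sqrt (‖x‖ ^ 2 + ε * g x) ≤ Real.sqrt ((1 + ε * S) * ‖x‖ ^ 2) :=
          Real.sqrt_le_sqrt h1
      _ = Real.sqrt (1 + ε * S) * ‖x‖ := by
          rw [Real.sqrt_mul (by nlinarith [mul_nonneg hε.le hS0] : (0:ℝ) ≤ 1 + ε * S),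
            Real.sqrt_sq (norm_nonneg x)]
  have hCpos : 0 < Real.sqrt (1 + ε * S) :=
    Real.sqrt_pos.2 (by nlinarith [mul_nonneg hε.le hS0])
  -- cross terms and Cauchy–Schwarz
  have habs_sum : ∀ x y : X, Summable fun i => c i * (|xs i x| * |xs i y|) := by
    intro x y
    refine Summable.of_nonneg_of_le
      (fun i => mul_nonneg (hc i).le (mul_nonneg (abs_nonneg _) (abs_nonneg _)))
      (fun i => ?_) (hsum.mul_right (‖x‖ * ‖y‖))
    have h1 : |xs i x| ≤ ‖xs i‖ * ‖x‖ := by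
      simpa [Real.norm_eq_abs] using (xs i).le_opNorm x
    have h2 : |xs i y| ≤ ‖xs i‖ * ‖y‖ := by
      simpa [Real.norm_eq_abs] using (xs i).le_opNorm y
    have h3 := mul_le_mul h1 h2 (abs_nonneg _) (mul_nonneg (norm_nonneg _) (norm_nonneg _))
    calc c i * (|xs i x| * |xs i y|) ≤ c i * (‖xs i‖ * ‖x‖ * (‖xs i‖ * ‖y‖)) :=
          mul_le_mul_of_nonneg_left h3 (hc i).le
      _ = c i * ‖xs i‖ ^ 2 * (‖x‖ * ‖y‖) := by ring
  have hmul_sum : ∀ x y : X, Summable fun i => c i * (xs i x * xs i y) := by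
    intro x y
    refine Summable.of_norm ((habs_sum x y).congr fun i => ?_)
    rw [Real.norm_eq_abs, abs_mul, abs_of_pos (hc i), abs_mul]
  have hCS : ∀ x y : X,
      (∑' i, c i * (|xs i x| * |xs i y|)) ≤ Real.sqrt (g x) * Real.sqrt (g y) := by
    intro x y
    refine Summable.tsum_le_of_sum_le (habs_sum x y) fun s => ?_
    have key : (∑ i ∈ s, c i * (|xs i x| * |xs i y|)) ^ 2
        ≤ (∑ i ∈ s, c i * (xs i x) ^ 2) * (∑ i ∈ s, c i * (xs i y) ^ 2) := by
      calc (∑ i ∈ s, c i * (|xs i x| * |xs i y|)) ^ 2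
          = (∑ i ∈ s, (Real.sqrt (c i) * |xs i x|) * (Real.sqrt (c i) * |xs i y|)) ^ 2 := by
            congr 1
            refine Finset.sum_congr rfl fun i _ => ?_
            rw [mul_mul_mul_comm, Real.mul_self_sqrt (hc i).le]
        _ ≤ (∑ i ∈ s, (Real.sqrt (c i) * |xs i x|) ^ 2)
              * (∑ i ∈ s, (Real.sqrt (c i) * |xs i y|) ^ 2) :=
            Finset.sum_mul_sq_le_sq_mul_sq s _ _
        _ = (∑ i ∈ s, c i * (xs i x) ^ 2) * (∑ i ∈ s, c i * (xs i y) ^ 2) := by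
            congr 1 <;> exact Finset.sum_congr rfl fun i _ => by
              rw [mul_pow, Real.sq_sqrt (hc i).le, sq_abs]
    have b1 : (∑ i ∈ s, c i * (xs i x) ^ 2) ≤ g x :=
      Summable.sum_le_tsum s (fun i _ => mul_nonneg (hc i).le (sq_nonneg _)) (hsx x)
    have b2 : (∑ i ∈ s, c i * (xs i y) ^ 2) ≤ g y :=
      Summable.sum_le_tsum s (fun i _ => mul_nonneg (hc i).le (sq_nonneg _)) (hsx y)
    have bx0 : (0:ℝ) ≤ ∑ i ∈ s, c i * (xs i y) ^ 2 :=
      Finset.sum_nonneg fun i _ => mul_nonneg (hc i).le (sq_nonneg _)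
    have hs0 : (0:ℝ) ≤ ∑ i ∈ s, c i * (|xs i x| * |xs i y|) :=
      Finset.sum_nonneg fun i _ =>
        mul_nonneg (hc i).le (mul_nonneg (abs_nonneg _) (abs_nonneg _))
    have key2 : (∑ i ∈ s, c i * (|xs i x| * |xs i y|)) ^ 2 ≤ g x * g y :=
      key.trans (mul_le_mul b1 b2 bx0 (hg0 x))
    calc (∑ i ∈ s, c i * (|xs i x| * |xs i y|))
        = Real.sqrt ((∑ i ∈ s, c i * (|xs i x| * |xs i y|)) ^ 2) :=
          (Real.sqrt_sq hs0).symm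
      _ ≤ Real.sqrt (g x * g y) := Real.sqrt_le_sqrt key2
      _ = Real.sqrt (g x) * Real.sqrt (g y) := Real.sqrt_mul (hg0 x) _
  have hD : ∀ x y : X,
      (∑' i, c i * (xs i x * xs i y)) ≤ Real.sqrt (g x) * Real.sqrt (g y) := by
    intro x y
    refine le_trans (Summable.tsum_le_tsum (fun i => ?_) (hmul_sum x y) (habs_sum x y)) (hCS x y)
    have : xs i x * xs i y ≤ |xs i x| * |xs i y| := by
      calc xs i x * xs i y ≤ |xs i x * xs i y| := le_abs_self _
        _ = |xs i x| * |xs i y| := abs_mul _ _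
    exact mul_le_mul_of_nonneg_left this (hc i).le
  -- triangle inequality
  have htri : ∀ x y : X, N (x + y) ≤ N x + N y := by
    intro x y
    have hsplit : g (x + y) = g x + g y + 2 * ∑' i, c i * (xs i x * xs i y) := by
      have e : ∀ i, c i * (xs i (x + y)) ^ 2
          = (c i * (xs i x) ^ 2 + c i * (xs i y) ^ 2) + 2 * (c i * (xs i x * xs i y)) := by
        intro i; rw [map_add]; ring
      calc g (x + y)
          = ∑' i, ((c i * (xs i x) ^ 2 + c i * (xs i y) ^ 2)
              + 2 * (c i * (xs i x * xs i y))) := tsum_congr e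
        _ = (∑' i, (c i * (xs i x) ^ 2 + c i * (xs i y) ^ 2))
              + ∑' i, 2 * (c i * (xs i x * xs i y)) :=
            Summable.tsum_add ((hsx x).add (hsx y)) ((hmul_sum x y).mul_left 2)
        _ = g x + g y + 2 * ∑' i, c i * (xs i x * xs i y) := by
            rw [Summable.tsum_add (hsx x) (hsx y), tsum_mul_left]
    set p := Real.sqrt (g x) with hpdef
    set q := Real.sqrt (g y) with hqdef
    have hp : p ^ 2 = g x := Real.sq_sqrt (hg0 x)
    have hq : q ^ 2 = g y := Real.sq_sqrt (hg0 y)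
    have hp0 : 0 ≤ p := Real.sqrt_nonneg _
    have hq0 : 0 ≤ q := Real.sqrt_nonneg _
    have hprod : ‖x‖ * ‖y‖ + ε * (p * q) ≤ N x * N y := by
      have h2 : (‖x‖ * ‖y‖ + ε * (p * q)) ^ 2 ≤ (N x * N y) ^ 2 := by
        have e2 : (N x * N y) ^ 2 = (‖x‖ ^ 2 + ε * g x) * (‖y‖ ^ 2 + ε * g y) := by
          rw [mul_pow, hNsq, hNsq]
        rw [e2, ← hp, ← hq]
        nlinarith [sq_nonneg (‖x‖ * q - p * ‖y‖), hp0, hq0,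
          mul_nonneg (norm_nonneg x) (norm_nonneg y), hε.le, sq_nonneg (‖x‖ * q + p * ‖y‖)]
      have hnn : 0 ≤ ‖x‖ * ‖y‖ + ε * (p * q) := by positivity
      nlinarith [mul_nonneg (hN0 x) (hN0 y)]
    have hkey : N (x + y) ^ 2 ≤ (N x + N y) ^ 2 := by
      have h1 : N (x + y) ^ 2 = ‖x + y‖ ^ 2 + ε * g (x + y) := hNsq _
      have h2 : ‖x + y‖ ^ 2 ≤ (‖x‖ + ‖y‖) ^ 2 := by
        nlinarith [norm_add_le x y, norm_nonneg (x + y), norm_nonneg x, norm_nonneg y]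
      have hgd : g (x + y) ≤ g x + g y + 2 * (p * q) := by
        rw [hsplit]; linarith [hD x y]
      nlinarith [hNsq x, hNsq y, hprod, mul_le_mul_of_nonneg_left hgd hε.le]
    calc N (x + y) = Real.sqrt (N (x + y) ^ 2) := (Real.sqrt_sq (hN0 _)).symm
      _ ≤ Real.sqrt ((N x + N y) ^ 2) := Real.sqrt_le_sqrt hkey
      _ = N x + N y := Real.sqrt_sq (add_nonneg (hN0 x) (hN0 y))
  -- homogeneity
  have hhom : ∀ (t : ℝ) (x : X), N (t • x) = |t| * N x := by
    intro t x
    have hgt : g (t • x) = t ^ 2 * g x := by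
      calc g (t • x) = ∑' i, t ^ 2 * (c i * (xs i x) ^ 2) := by
            refine tsum_congr fun i => ?_
            rw [map_smul, smul_eq_mul]; ring
        _ = t ^ 2 * g x := tsum_mul_left
    rw [hNg, hNg, hgt, norm_smul, Real.norm_eq_abs]
    have e : (|t| * ‖x‖) ^ 2 + ε * (t ^ 2 * g x) = t ^ 2 * (‖x‖ ^ 2 + ε * g x) := by
      rw [mul_pow, sq_abs]; ring
    rw [e, Real.sqrt_mul (sq_nonneg t), Real.sqrt_sq_eq_abs]
  -- definiteness
  have hdef : ∀ x : X, N x = 0 → x = 0 := by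
    intro x hx
    rw [hNg x] at hx
    have h1 : ‖x‖ ^ 2 + ε * g x ≤ 0 := by
      by_contra h
      push_neg at h
      exact absurd hx (ne_of_gt (Real.sqrt_pos.2 h))
    have h2 : ‖x‖ = 0 := by
      nlinarith [mul_nonneg hε.le (hg0 x), norm_nonneg x]
    exact norm_eq_zero.1 h2
  -- the continuous bilinear map and smoothness of g
  have hTnorm : ∀ i : ℕ, ‖((xs i).smulRight (c i • xs i) : X →L[ℝ] X →L[ℝ] ℝ)‖
      = c i * ‖xs i‖ ^ 2 := by
    intro i
    have e1 : ‖c i • xs i‖ = ‖c i‖ * ‖xs i‖ := by exact norm_smul _ _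
    rw [ContinuousLinearMap.norm_smulRight_apply, e1, Real.norm_eq_abs,
      abs_of_pos (hc i), sq]
    ring
  have hnorm : Summable fun i : ℕ =>
      ‖((xs i).smulRight (c i • xs i) : X →L[ℝ] X →L[ℝ] ℝ)‖ :=
    hsum.congr fun i => (hTnorm i).symm
  obtain ⟨B, hB⟩ :=
    auxB (fun i => ((xs i).smulRight (c i • xs i) : X →L[ℝ] X →L[ℝ] ℝ)) hnorm
  have hBxy : ∀ x y : X, B x y = ∑' i, c i * (xs i x * xs i y) := by
    intro x y
    have hTx := auxSum (fun i => ((xs i).smulRight (c i • xs i) : X →L[ℝ] X →L[ℝ] ℝ)) hnorm x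
    have h2 : B x y = ∑' i, ((xs i).smulRight (c i • xs i) : X →L[ℝ] X →L[ℝ] ℝ) x y := by
      rw [hB x]
      exact (ContinuousLinearMap.apply ℝ ℝ y).map_tsum hTx
    rw [h2]
    refine tsum_congr fun i => ?_
    simp only [ContinuousLinearMap.smulRight_apply, ContinuousLinearMap.coe_smul',
      Pi.smul_apply, smul_eq_mul]
    ring
  have hBg : ∀ x : X, B x x = g x := by
    intro x
    rw [hBxy x x]
    exact tsum_congr fun i => by rw [sq]
  have hgsm : ContDiff ℝ k g := by
    have h1 : ContDiff ℝ k fun x : X => B x x :=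
      (B.isBoundedBilinearMap.contDiff).comp (contDiff_id.prodMk contDiff_id)
    have e : (fun x : X => B x x) = g := funext hBg
    rwa [e] at h1
  have hA : ContDiffOn ℝ k (fun z : X => ‖z‖ ^ 2 + ε * g z) {(0 : X)}ᶜ :=
    (hsmooth.pow 2).add (contDiff_const.mul hgsm).contDiffOn
  have hsq2 : ContDiffOn ℝ k (fun z : X => N z ^ 2) {(0 : X)}ᶜ :=
    hA.congr fun z _ => hNsq z
  have hApos : ∀ z : X, z ∈ ({(0 : X)}ᶜ : Set X) → ‖z‖ ^ 2 + ε * g z ≠ 0 := by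
    intro z hz
    have hz0 : z ≠ 0 := hz
    have : 0 < ‖z‖ := norm_pos_iff.2 hz0
    have := mul_nonneg hε.le (hg0 z)
    positivity
  have hNsm : ContDiffOn ℝ k N {(0 : X)}ᶜ :=
    (hA.sqrt hApos).congr fun z _ => hNg z
  refine ⟨⟨htri, hhom, hdef⟩,
    ⟨1, Real.sqrt (1 + ε * S), one_pos, hCpos, fun x => ⟨by rw [one_mul]; exact hlow x, hup x⟩⟩,
    hsq2, hNsm, fun z => ?_⟩
  constructor
  · linarith [hlow z]
  · have e : ‖z‖ * (Real.sqrt (1 + ε * S) - 1) = Real.sqrt (1 + ε * S) * ‖z‖ - ‖z‖ := by ring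
    rw [e]
    linarith [hup z]
end

section
/- Let (X, ‖·‖) be a real Banach space, let {(x_i, x_i*)}_{i∈ℕ} be a biorthogonal system (x_i*(x_j) = 1 if i = j and 0 otherwise), let (c_i) be positive reals with Σ_i c_i ‖x_i*‖² < ∞, let ε > 0, and define the equivalent norm |||x|||² = ‖x‖² + ε Σ_{i=1}^∞ c_i (x_i*(x))². Let n ∈ ℕ and E = span(x_1, …, x_n). Then for every x ∈ X there exists exactly one point a ∈ E with |||x − a||| = inf{|||x − e||| : e ∈ E}; that is, the nearest-point (metric projection) map from (X, |||·|||) onto E is well defined and single-valued. -/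
open Filter Topology

/-- For the equivalent norm `|||x|||² = ‖x‖² + ε Σᵢ cᵢ (xᵢ*(x))²` built from a biorthogonal
system, every point of `X` has exactly one nearest point in `E = span(x_1, …, x_n)`. -/
theorem existsUnique_nearest_point
    {X : Type*} [NormedAddCommGroup X] [NormedSpace ℝ X] [CompleteSpace X]
    (x : ℕ → X) (xs : ℕ → StrongDual ℝ X)
    (hbi : ∀ i j : ℕ, xs i (x j) = if i = j then 1 else 0)
    (c : ℕ → ℝ) (hc : ∀ i : ℕ, 0 < c i)
    (hsum : Summable fun i : ℕ => c i * ‖xs i‖ ^ 2)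
    (ε : ℝ) (hε : 0 < ε)
    (N : X → ℝ)
    (hN : ∀ z : X, N z = Real.sqrt (‖z‖ ^ 2 + ε * ∑' i : ℕ, c i * (xs i z) ^ 2))
    (n : ℕ) (z : X) :
    ∃! a : X,
      a ∈ Submodule.span ℝ (Set.range fun i : Fin n => x i) ∧
      N (z - a) =
        ⨅ e : ↥(Submodule.span ℝ (Set.range fun i : Fin n => x i)), N (z - (e : X)) := by
  set E := Submodule.span ℝ (Set.range fun i : Fin n => x i) with hE
  haveI : FiniteDimensional ℝ E :=
    FiniteDimensional.span_of_finite ℝ (Set.finite_range _)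
  -- basic facts about the series
  have hterm_nn : ∀ w : X, ∀ i, 0 ≤ c i * (xs i w) ^ 2 := fun w i =>
    mul_nonneg (hc i).le (sq_nonneg _)
  have hterm_le : ∀ w : X, ∀ i, c i * (xs i w) ^ 2 ≤ (c i * ‖xs i‖ ^ 2) * ‖w‖ ^ 2 := by
    intro w i
    have h1 : |xs i w| ≤ ‖xs i‖ * ‖w‖ := by
      simpa [Real.norm_eq_abs] using (xs i).le_opNorm w
    have h2 : (xs i w) ^ 2 ≤ (‖xs i‖ * ‖w‖) ^ 2 := by
      rw [← sq_abs]
      exact pow_le_pow_left₀ (abs_nonneg _) h1 2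
    calc c i * (xs i w) ^ 2 ≤ c i * ((‖xs i‖ * ‖w‖) ^ 2) := by
          exact mul_le_mul_of_nonneg_left h2 (hc i).le
      _ = (c i * ‖xs i‖ ^ 2) * ‖w‖ ^ 2 := by ring
  have hsumm : ∀ w : X, Summable fun i => c i * (xs i w) ^ 2 := by
    intro w
    exact Summable.of_nonneg_of_le (hterm_nn w) (hterm_le w) (hsum.mul_right _)
  set S : X → ℝ := fun w => ∑' i, c i * (xs i w) ^ 2 with hSdef
  have hSnn : ∀ w, 0 ≤ S w := fun w => tsum_nonneg (hterm_nn w)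
  set M : X → ℝ := fun w => ‖w‖ ^ 2 + ε * S w with hMdef
  have hMnn : ∀ w, 0 ≤ M w := fun w =>
    add_nonneg (sq_nonneg _) (mul_nonneg hε.le (hSnn w))
  have hNM : ∀ w, N w = Real.sqrt (M w) := hN
  have hNnn : ∀ w, 0 ≤ N w := fun w => (hNM w) ▸ Real.sqrt_nonneg _
  have hNsq : ∀ w, (N w) ^ 2 = M w := fun w => by
    rw [hNM]; exact Real.sq_sqrt (hMnn w)
  have hnormle : ∀ w : X, ‖w‖ ≤ N w := by
    intro w
    rw [hNM]
    have : ‖w‖ ^ 2 ≤ M w := le_add_of_nonneg_right (mul_nonneg hε.le (hSnn w))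
    calc ‖w‖ = Real.sqrt (‖w‖ ^ 2) := by
          rw [Real.sqrt_sq (norm_nonneg _)]
      _ ≤ Real.sqrt (M w) := Real.sqrt_le_sqrt this
  -- the function to minimize
  set f : E → ℝ := fun e => N (z - (e : X)) with hfdef
  have hbdd : BddBelow (Set.range f) := by
    refine ⟨0, ?_⟩
    rintro r ⟨e, rfl⟩
    exact hNnn _
  -- continuity of f on closed balls
  have hfcont : ∀ R : ℝ, ContinuousOn f (Metric.closedBall (0 : E) R) := by
    intro R
    have hScont : ContinuousOn S (Metric.closedBall (0 : X) (‖z‖ + |R|)) := by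
      apply continuousOn_tsum (u := fun i => (c i * ‖xs i‖ ^ 2) * (‖z‖ + |R|) ^ 2)
      · intro i
        exact (continuous_const.mul ((xs i).continuous.pow 2)).continuousOn
      · exact (hsum.mul_right _)
      · intro i w hw
        rw [Real.norm_eq_abs, abs_of_nonneg (hterm_nn w i)]
        calc c i * (xs i w) ^ 2 ≤ (c i * ‖xs i‖ ^ 2) * ‖w‖ ^ 2 := hterm_le w i
          _ ≤ (c i * ‖xs i‖ ^ 2) * (‖z‖ + |R|) ^ 2 := by
              apply mul_le_mul_of_nonneg_left
              · apply pow_le_pow_left₀ (norm_nonneg _)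
                exact mem_closedBall_zero_iff.mp hw
              · exact mul_nonneg (hc i).le (sq_nonneg _)
    have hmap : Set.MapsTo (fun e : E => z - (e : X)) (Metric.closedBall (0 : E) R)
        (Metric.closedBall (0 : X) (‖z‖ + |R|)) := by
      intro e he
      simp only [Metric.mem_closedBall, dist_zero_right] at he ⊢
      calc ‖z - (e : X)‖ ≤ ‖z‖ + ‖(e : X)‖ := norm_sub_le _ _
        _ ≤ ‖z‖ + |R| := by
            have : ‖(e : X)‖ = ‖e‖ := rfl
            rw [this]
            exact add_le_add (le_refl _) (he.trans (le_abs_self R))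
    have hsubcont : ContinuousOn (fun e : E => z - (e : X))
        (Metric.closedBall (0 : E) R) :=
      (continuous_const.sub continuous_subtype_val).continuousOn
    have hMcont : ContinuousOn (fun e : E => M (z - (e : X)))
        (Metric.closedBall (0 : E) R) := by
      apply ContinuousOn.add
      · exact ((continuous_const.sub continuous_subtype_val).norm.pow 2).continuousOn
      · exact ContinuousOn.mul continuousOn_const (hScont.comp hsubcont hmap)
    have : f = fun e : E => Real.sqrt (M (z - (e : X))) := by
      funext e; exact hNM _
    rw [this]
    exact Real.continuous_sqrt.comp_continuousOn hMcont
  -- existence of a minimizer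
  set R₀ : ℝ := ‖z‖ + N z with hR₀
  have hR₀nn : 0 ≤ R₀ := add_nonneg (norm_nonneg _) (hNnn _)
  obtain ⟨a, haB, hamin⟩ :=
    (isCompact_closedBall (0 : E) R₀).exists_isMinOn
      ⟨0, by simpa using hR₀nn⟩ (hfcont R₀)
  have hglobal : ∀ e : E, f a ≤ f e := by
    intro e
    by_cases he : e ∈ Metric.closedBall (0 : E) R₀
    · exact hamin he
    · have h0 : f a ≤ f 0 := hamin (by simpa using hR₀nn)
      have hf0 : f 0 = N z := by simp [hfdef]
      have hne : R₀ < ‖e‖ := by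
        simpa [Metric.mem_closedBall, dist_zero_right] using he
      have : N z ≤ f e := by
        have h1 : ‖(e : X)‖ - ‖z‖ ≤ ‖z - (e : X)‖ := by
          have := norm_sub_norm_le ((e : X)) (z)
          calc ‖(e : X)‖ - ‖z‖ ≤ ‖(e : X) - z‖ := by
                simpa using norm_sub_norm_le ((e : X)) z
            _ = ‖z - (e : X)‖ := by rw [norm_sub_rev]
        have h2 : N z ≤ ‖(e : X)‖ - ‖z‖ := by
          have : ‖(e : X)‖ = ‖e‖ := rfl
          rw [this]
          linarith [hne]
        exact h2.trans (h1.trans (hnormle _))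
      calc f a ≤ f 0 := h0
        _ = N z := hf0
        _ ≤ f e := this
  have hinf : f a = ⨅ e : E, f e := by
    apply le_antisymm
    · exact le_ciInf hglobal
    · exact ciInf_le hbdd a
  -- a key tool: the index with nonzero functional value on a nonzero element of E
  have hkey : ∀ w : X, w ∈ E → w ≠ 0 → ∃ i : Fin n, xs i w ≠ 0 := by
    intro w hw hw0
    rw [hE, Submodule.mem_span_range_iff_exists_fun] at hw
    obtain ⟨t, ht⟩ := hw
    have hval : ∀ i : Fin n, xs i w = t i := by
      intro i
      rw [← ht, map_sum]
      have : ∀ j : Fin n, xs i (t j • x j) = if (i : ℕ) = (j : ℕ) then t j else 0 := by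
        intro j
        rw [map_smul, hbi]
        by_cases h : (i : ℕ) = (j : ℕ) <;> simp [h]
      rw [Finset.sum_congr rfl (fun j _ => this j)]
      simp [Fin.val_eq_val]
    by_contra hcon
    push_neg at hcon
    apply hw0
    rw [← ht]
    apply Finset.sum_eq_zero
    intro j _
    have : t j = 0 := by rw [← hval j]; exact hcon j
    rw [this, zero_smul]
  -- parallelogram-type identity for S
  have hSpar : ∀ u v : X,
      S ((2 : ℝ)⁻¹ • (u + v)) = 2⁻¹ * (S u + S v) - 4⁻¹ * S (u - v) := by
    intro u v
    have hpt : ∀ i, c i * (xs i ((2 : ℝ)⁻¹ • (u + v))) ^ 2 =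
        2⁻¹ * (c i * (xs i u) ^ 2 + c i * (xs i v) ^ 2)
          - 4⁻¹ * (c i * (xs i (u - v)) ^ 2) := by
      intro i
      rw [map_smul, map_add, map_sub]
      simp only [smul_eq_mul]
      ring
    calc S ((2 : ℝ)⁻¹ • (u + v))
        = ∑' i, (2⁻¹ * (c i * (xs i u) ^ 2 + c i * (xs i v) ^ 2)
            - 4⁻¹ * (c i * (xs i (u - v)) ^ 2)) := tsum_congr hpt
      _ = (∑' i, 2⁻¹ * (c i * (xs i u) ^ 2 + c i * (xs i v) ^ 2))
            - ∑' i, 4⁻¹ * (c i * (xs i (u - v)) ^ 2) := by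
          apply Summable.tsum_sub
          · exact (((hsumm u).add (hsumm v))).mul_left _
          · exact (hsumm (u - v)).mul_left _
      _ = 2⁻¹ * (S u + S v) - 4⁻¹ * S (u - v) := by
          rw [tsum_mul_left, tsum_mul_left,
            Summable.tsum_add (hsumm u) (hsumm v)]
  -- positivity of S on nonzero elements of E
  have hSpos : ∀ w : X, w ∈ E → w ≠ 0 → 0 < S w := by
    intro w hw hw0
    obtain ⟨i, hi⟩ := hkey w hw hw0
    have hpos : 0 < c i * (xs i w) ^ 2 :=
      mul_pos (hc i) (lt_of_le_of_ne (sq_nonneg _) (Ne.symm (pow_ne_zero 2 hi)))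
    calc (0 : ℝ) < c i * (xs i w) ^ 2 := hpos
      _ ≤ S w := Summable.le_tsum (hsumm w) i (fun j _ => hterm_nn w j)
  -- строгая convexity : midpoint strictly better
  have hmid : ∀ u v : X, u - v ∈ E → u ≠ v →
      M ((2 : ℝ)⁻¹ • (u + v)) < 2⁻¹ * (M u + M v) := by
    intro u v hEuv huv
    have hSp : 0 < S (u - v) := hSpos _ hEuv (sub_ne_zero.mpr huv)
    have hnorm : ‖(2 : ℝ)⁻¹ • (u + v)‖ ^ 2 ≤ 2⁻¹ * (‖u‖ ^ 2 + ‖v‖ ^ 2) := by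
      have h1 : ‖(2 : ℝ)⁻¹ • (u + v)‖ ≤ 2⁻¹ * (‖u‖ + ‖v‖) := by
        rw [norm_smul]
        simp only [norm_inv, Real.norm_ofNat]
        exact mul_le_mul_of_nonneg_left (norm_add_le u v) (by norm_num)
      have h2 : (2⁻¹ * (‖u‖ + ‖v‖)) ^ 2 ≤ 2⁻¹ * (‖u‖ ^ 2 + ‖v‖ ^ 2) := by
        nlinarith [sq_nonneg (‖u‖ - ‖v‖)]
      calc ‖(2 : ℝ)⁻¹ • (u + v)‖ ^ 2 ≤ (2⁻¹ * (‖u‖ + ‖v‖)) ^ 2 :=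
            pow_le_pow_left₀ (norm_nonneg _) h1 2
        _ ≤ _ := h2
    have hS2 := hSpar u v
    have : M ((2 : ℝ)⁻¹ • (u + v))
        ≤ 2⁻¹ * (M u + M v) - ε * (4⁻¹ * S (u - v)) := by
      simp only [hMdef]
      rw [hS2]
      nlinarith [hnorm, hε.le]
    have hpos : 0 < ε * (4⁻¹ * S (u - v)) := by positivity
    linarith
  -- assemble
  refine ⟨a, ⟨a.2, by simpa [hfdef] using hinf⟩, ?_⟩
  rintro b ⟨hbE, hbmin⟩
  by_contra hba
  have hfa : f a = ⨅ e : E, f e := hinf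
  set d : ℝ := ⨅ e : E, f e with hd
  have hda : N (z - (a : X)) = d := hfa
  have hdb : N (z - b) = d := hbmin
  -- the midpoint
  have hmidE : (2 : ℝ)⁻¹ • ((a : X) + b) ∈ E := by
    exact E.smul_mem _ (E.add_mem a.2 hbE)
  set m : E := ⟨(2 : ℝ)⁻¹ • ((a : X) + b), hmidE⟩ with hm
  have hzm : z - (m : X) = (2 : ℝ)⁻¹ • ((z - (a : X)) + (z - b)) := by
    simp only [hm]
    module
  have hsubE : (z - (a : X)) - (z - b) ∈ E := by
    have : (z - (a : X)) - (z - b) = b - (a : X) := by abel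
    rw [this]
    exact E.sub_mem hbE a.2
  have hne : z - (a : X) ≠ z - b := by
    intro h
    exact hba (sub_right_injective h).symm
  have hMlt := hmid (z - (a : X)) (z - b) hsubE hne
  have hMa : M (z - (a : X)) = d ^ 2 := by rw [← hNsq, hda]
  have hMb : M (z - b) = d ^ 2 := by rw [← hNsq, hdb]
  have hMm : M (z - (m : X)) < d ^ 2 := by
    rw [hzm]
    calc M ((2 : ℝ)⁻¹ • ((z - (a : X)) + (z - b)))
        < 2⁻¹ * (M (z - (a : X)) + M (z - b)) := hMlt
      _ = d ^ 2 := by rw [hMa, hMb]; ring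
  have hdnn : 0 ≤ d := hda ▸ hNnn _
  have hNm : N (z - (m : X)) < d := by
    rw [hNM]
    calc Real.sqrt (M (z - (m : X))) < Real.sqrt (d ^ 2) := by
          apply Real.sqrt_lt_sqrt (hMnn _) hMm
      _ = d := Real.sqrt_sq hdnn
  have : d ≤ N (z - (m : X)) := ciInf_le hbdd m
  linarith
end

section
/- Let (X, ‖·‖) be a real Banach space whose norm is C^k-smooth with k ∈ {2, 3, …, ∞}, let {(x_i, x_i*)}_{i∈ℕ} be a biorthogonal system (x_i*(x_j) = 1 if i = j and 0 otherwise), let (c_i) be positive reals with Σ_i c_i ‖x_i*‖² < ∞, let ε > 0, and define |||x|||² = ‖x‖² + ε Σ_{i=1}^∞ c_i (x_i*(x))². Fix n ∈ ℕ and x ∈ X, and define h : ℝⁿ → ℝ by h(a_1, …, a_n) = |||x + Σ_{i=1}^n a_i x_i|||². Then at every point a ∈ ℝⁿ with x + Σ_{i=1}^n a_i x_i ≠ 0, the function h is twice continuously differentiable and its Hessian matrix (∂²h/∂a_i∂a_j)_{i,j=1,…,n} is positive definite. -/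
open Filter Topology

private lemma aux_diff_deriv {f : ℝ → ℝ} {t : ℝ} (hf : ContDiffAt ℝ 2 f t) :
    DifferentiableAt ℝ (deriv f) t := by
  have h1 : ContDiffAt ℝ 1 (fderiv ℝ f) t := hf.fderiv_right (m := 1) (by norm_num)
  have h2 : DifferentiableAt ℝ (fun s => fderiv ℝ f s 1) t :=
    (ContinuousLinearMap.apply ℝ ℝ (1:ℝ)).differentiableAt.comp t (h1.differentiableAt one_ne_zero)
  have h3 : deriv f = fun s => fderiv ℝ f s 1 := by
    funext s; exact (fderiv_apply_one_eq_deriv).symm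
  rw [h3]; exact h2

private lemma aux_deriv_nonneg_of_monotoneOn {g : ℝ → ℝ} {δ : ℝ} (hδ : 0 < δ)
    (hmono : MonotoneOn g (Metric.ball (0:ℝ) δ)) (hdiff : DifferentiableAt ℝ g 0) :
    0 ≤ deriv g 0 := by
  have hder := hdiff.hasDerivAt
  rw [hasDerivAt_iff_tendsto_slope] at hder
  have h2 : Tendsto (slope g 0) (𝓝[>] (0:ℝ)) (𝓝 (deriv g 0)) :=
    hder.mono_left (nhdsWithin_mono _ (fun t ht => ne_of_gt ht))
  refine ge_of_tendsto h2 ?_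
  filter_upwards [Ioo_mem_nhdsGT_of_mem (Set.mem_Ico.2 ⟨le_refl (0:ℝ), hδ⟩)] with t ht
  have h0 : (0:ℝ) ∈ Metric.ball (0:ℝ) δ := by simpa using hδ
  have htb : t ∈ Metric.ball (0:ℝ) δ := by
    rw [Metric.mem_ball, Real.dist_eq, sub_zero, abs_of_nonneg (le_of_lt ht.1)]
    exact ht.2
  have hle := hmono h0 htb (le_of_lt ht.1)
  rw [slope_def_field]
  have : (0:ℝ) < t - 0 := by simpa using ht.1
  exact div_nonneg (by linarith) (by linarith)

private lemma aux_diff_deriv' {f : ℝ → ℝ} {t : ℝ} (hf : ContDiffAt ℝ 2 f t) :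
    DifferentiableAt ℝ (deriv f) t := by
  have h1 : ContDiffAt ℝ 1 (fderiv ℝ f) t := hf.fderiv_right (m := 1) (by norm_num)
  have h2 : DifferentiableAt ℝ (fun s => fderiv ℝ f s 1) t :=
    (ContinuousLinearMap.apply ℝ ℝ (1:ℝ)).differentiableAt.comp t (h1.differentiableAt one_ne_zero)
  have h3 : deriv f = fun s => fderiv ℝ f s 1 := by
    funext s; exact (fderiv_apply_one_eq_deriv).symm
  rw [h3]; exact h2

private lemma aux_second_deriv_nonneg' {f : ℝ → ℝ} {s : Set ℝ} (hs : IsOpen s)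
    (h0 : (0:ℝ) ∈ s) (hconv : ConvexOn ℝ Set.univ f)
    (hf : ∀ t ∈ s, ContDiffAt ℝ 2 f t) :
    0 ≤ deriv (deriv f) 0 := by
  obtain ⟨δ, hδ, hball⟩ := Metric.isOpen_iff.1 hs 0 h0
  have hmono : MonotoneOn (deriv f) (Metric.ball (0:ℝ) δ) :=
    (hconv.subset (Set.subset_univ _) (convex_ball _ _)).monotoneOn_deriv
      (fun t ht => (hf t (hball ht)).differentiableAt two_ne_zero)
  have hdiff : DifferentiableAt ℝ (deriv f) 0 := aux_diff_deriv' (hf 0 h0)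
  exact aux_deriv_nonneg_of_monotoneOn hδ hmono hdiff

private lemma aux_line_second_deriv {E : Type*} [NormedAddCommGroup E] [NormedSpace ℝ E]
    {f : E → ℝ} {s : Set E} (hs : IsOpen s) {a : E} (ha : a ∈ s)
    (hf : ∀ y ∈ s, ContDiffAt ℝ 2 f y) (v : E) :
    deriv (deriv fun t : ℝ => f (a + t • v)) 0 = fderiv ℝ (fderiv ℝ f) a v v := by
  have hl : ∀ t : ℝ, HasDerivAt (fun t : ℝ => a + t • v) v t := fun t => by
    simpa using ((hasDerivAt_id t).smul_const v).const_add a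
  have hTopen : IsOpen ((fun t : ℝ => a + t • v) ⁻¹' s) :=
    hs.preimage (continuous_const.add (continuous_id.smul continuous_const))
  have hT0 : (0:ℝ) ∈ (fun t : ℝ => a + t • v) ⁻¹' s := by
    simpa using ha
  have hstep1 : ∀ t ∈ (fun t : ℝ => a + t • v) ⁻¹' s,
      HasDerivAt (fun t : ℝ => f (a + t • v)) (fderiv ℝ f (a + t • v) v) t := by
    intro t ht
    exact ((hf _ ht).differentiableAt two_ne_zero).hasFDerivAt.comp_hasDerivAt t (hl t)
  have heq : deriv (fun t : ℝ => f (a + t • v)) =ᶠ[𝓝 (0:ℝ)]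
      fun t => fderiv ℝ f (a + t • v) v := by
    filter_upwards [hTopen.mem_nhds hT0] with t ht
    exact (hstep1 t ht).deriv
  have hg : DifferentiableAt ℝ (fderiv ℝ f) a :=
    ((hf a ha).fderiv_right (m := 1) (by norm_num)).differentiableAt one_ne_zero
  have hstep2 : HasDerivAt (fun t : ℝ => fderiv ℝ f (a + t • v) v)
      (fderiv ℝ (fderiv ℝ f) a v v) 0 := by
    have h1 : HasDerivAt (fun t : ℝ => fderiv ℝ f (a + t • v))
        (fderiv ℝ (fderiv ℝ f) a v) 0 := by
      have hgF : HasFDerivAt (fderiv ℝ f) (fderiv ℝ (fderiv ℝ f) a) (a + (0:ℝ) • v) := by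
        simpa using hg.hasFDerivAt
      exact hgF.comp_hasDerivAt 0 (hl 0)
    have := (ContinuousLinearMap.apply ℝ ℝ v).hasFDerivAt.comp_hasDerivAt 0 h1
    simpa [Function.comp_def] using this
  rw [heq.deriv_eq, hstep2.deriv]

private lemma aux_bilin_expand {E : Type*} [NormedAddCommGroup E] [NormedSpace ℝ E] {n : ℕ}
    (B : ContinuousMultilinearMap ℝ (fun _ : Fin 2 => E) ℝ) (v : Fin n → ℝ) (e : Fin n → E) :
    B ![∑ i, v i • e i, ∑ j, v j • e j] = ∑ i, ∑ j, (v i * v j) * B ![e i, e j] := by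
  classical
  have hm : ![∑ i, v i • e i, ∑ j, v j • e j]
      = fun i : Fin 2 => ∑ j ∈ Finset.univ, (fun (_ : Fin 2) (j : Fin n) => v j • e j) i j := by
    funext i; fin_cases i <;> rfl
  rw [hm, B.map_sum_finset]
  rw [show (Fintype.piFinset fun _ : Fin 2 => (Finset.univ : Finset (Fin n))) = Finset.univ from
    Fintype.piFinset_univ]
  rw [← Equiv.sum_comp (piFinTwoEquiv fun _ : Fin 2 => Fin n).symm]
  rw [Fintype.sum_prod_type]
  refine Finset.sum_congr rfl fun i _ => Finset.sum_congr rfl fun j _ => ?_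
  have h1 : (fun k : Fin 2 => v (((piFinTwoEquiv fun _ : Fin 2 => Fin n).symm (i, j)) k)
      • e (((piFinTwoEquiv fun _ : Fin 2 => Fin n).symm (i, j)) k))
      = fun k : Fin 2 => v (![i, j] k) • e (![i, j] k) := by
    funext k; fin_cases k <;> rfl
  show B (fun k => v (((piFinTwoEquiv fun _ : Fin 2 => Fin n).symm (i, j)) k)
      • e (((piFinTwoEquiv fun _ : Fin 2 => Fin n).symm (i, j)) k)) = _
  rw [h1]
  have h2 := B.map_smul_univ (fun k : Fin 2 => v (![i, j] k)) (fun k : Fin 2 => e (![i, j] k))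
  have h3 : (fun k : Fin 2 => v (![i, j] k) • e (![i, j] k))
      = fun k : Fin 2 => (fun k : Fin 2 => v (![i, j] k)) k • (fun k : Fin 2 => e (![i, j] k)) k := rfl
  rw [h3, h2, Fin.prod_univ_two]
  have h4 : (fun k : Fin 2 => e (![i, j] k)) = ![e i, e j] := by
    funext k; fin_cases k <;> rfl
  rw [h4]
  simp [smul_eq_mul]

/-- For the equivalent norm `|||x|||² = ‖x‖² + ε Σᵢ cᵢ (xᵢ*(x))²` built from a biorthogonal
system on a Banach space with a `C^k`-smooth norm (`k ≥ 2`), the function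
`h(a₁, …, aₙ) = |||x + Σ aᵢ xᵢ|||²` is twice continuously differentiable with positive
definite Hessian at every point where `x + Σ aᵢ xᵢ ≠ 0`. -/
theorem hessian_posDef_of_perturbed_norm
    {X : Type*} [NormedAddCommGroup X] [NormedSpace ℝ X] [CompleteSpace X]
    (k : ℕ∞) (hk : 2 ≤ k)
    (hsmooth : ContDiffOn ℝ k (fun z : X => ‖z‖) {(0 : X)}ᶜ)
    (x : ℕ → X) (xs : ℕ → StrongDual ℝ X)
    (hbi : ∀ i j : ℕ, xs i (x j) = if i = j then 1 else 0)
    (c : ℕ → ℝ) (hc : ∀ i : ℕ, 0 < c i)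
    (hsum : Summable fun i : ℕ => c i * ‖xs i‖ ^ 2)
    (ε : ℝ) (hε : 0 < ε)
    (N : X → ℝ)
    (hN : ∀ z : X, N z = Real.sqrt (‖z‖ ^ 2 + ε * ∑' i : ℕ, c i * (xs i z) ^ 2))
    (n : ℕ) (z : X)
    (h : (Fin n → ℝ) → ℝ)
    (hh : ∀ a : Fin n → ℝ, h a = N (z + ∑ i : Fin n, a i • x i) ^ 2) :
    ∀ a : Fin n → ℝ, z + ∑ i : Fin n, a i • x i ≠ 0 →
      ContDiffAt ℝ 2 h a ∧
      (Matrix.of fun i j : Fin n =>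
          iteratedFDeriv ℝ 2 h a ![Pi.single i 1, Pi.single j 1]).PosDef := by
  classical
  -- evaluation of the functionals at the affine point
  have hxsw : ∀ (b : Fin n → ℝ) (i : ℕ),
      xs i (z + ∑ j : Fin n, b j • x j)
        = xs i z + ∑ j : Fin n, b j * (if i = (j : ℕ) then 1 else 0) := by
    intro b i
    simp [map_add, map_sum, map_smul, hbi, smul_eq_mul]
  have hlt : ∀ (b : Fin n → ℝ) (j : Fin n),
      xs (j : ℕ) (z + ∑ i : Fin n, b i • x i) = xs (j : ℕ) z + b j := by
    intro b j
    rw [hxsw]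
    congr 1
    calc (∑ j' : Fin n, b j' * (if (j : ℕ) = (j' : ℕ) then 1 else 0))
        = ∑ j' : Fin n, (if j = j' then b j' else 0) := by
          refine Finset.sum_congr rfl fun j' _ => ?_
          by_cases hjj : j = j'
          · simp [hjj]
          · simp [hjj, (Fin.val_eq_val j j').not.2 hjj]
      _ = b j := by simp
  have hge : ∀ (b : Fin n → ℝ) (i : ℕ), n ≤ i →
      xs i (z + ∑ j : Fin n, b j • x j) = xs i z := by
    intro b i hi
    rw [hxsw]
    have : (∑ j : Fin n, b j * (if i = (j : ℕ) then 1 else 0)) = 0 := by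
      refine Finset.sum_eq_zero fun j _ => ?_
      rw [if_neg, mul_zero]
      have := j.isLt
      omega
    rw [this, add_zero]
  -- summability
  have hably : ∀ u : X, Summable fun i : ℕ => c i * (xs i u) ^ 2 := by
    intro u
    refine Summable.of_nonneg_of_le (fun i => mul_nonneg (hc i).le (sq_nonneg _)) (fun i => ?_)
      (hsum.mul_right (‖u‖ ^ 2))
    have h1 : ‖xs i u‖ ≤ ‖xs i‖ * ‖u‖ := (xs i).le_opNorm u
    rw [Real.norm_eq_abs] at h1
    have h2 : (xs i u) ^ 2 ≤ (‖xs i‖ * ‖u‖) ^ 2 := by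
      nlinarith [abs_nonneg (xs i u), sq_abs (xs i u)]
    have h3 : (0:ℝ) ≤ c i := (hc i).le
    calc c i * (xs i u) ^ 2 ≤ c i * ((‖xs i‖ * ‖u‖) ^ 2) := by nlinarith
      _ = c i * ‖xs i‖ ^ 2 * ‖u‖ ^ 2 := by ring
  -- the global formula for h
  have hform : ∀ b : Fin n → ℝ,
      h b = ‖z + ∑ i : Fin n, b i • x i‖ ^ 2
        + (ε * ∑ j : Fin n, c (j : ℕ) * (xs (j : ℕ) z + b j) ^ 2
           + ε * ∑' i : ℕ, c (i + n) * (xs (i + n) z) ^ 2) := by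
    intro b
    have hnn : (0:ℝ) ≤ ‖z + ∑ i : Fin n, b i • x i‖ ^ 2
        + ε * ∑' i : ℕ, c i * (xs i (z + ∑ i : Fin n, b i • x i)) ^ 2 := by
      have ht : (0:ℝ) ≤ ∑' i : ℕ, c i * (xs i (z + ∑ i : Fin n, b i • x i)) ^ 2 :=
        tsum_nonneg (fun i => mul_nonneg (hc i).le (sq_nonneg _))
      positivity
    rw [hh b, hN, Real.sq_sqrt hnn]
    have h1 : (∑' i : ℕ, c i * (xs i (z + ∑ i : Fin n, b i • x i)) ^ 2)
        = (∑ j : Fin n, c (j : ℕ) * (xs (j : ℕ) z + b j) ^ 2)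
          + ∑' i : ℕ, c (i + n) * (xs (i + n) z) ^ 2 := by
      rw [← Summable.sum_add_tsum_nat_add n (hably (z + ∑ i : Fin n, b i • x i))]
      congr 1
      · rw [← Fin.sum_univ_eq_sum_range
          (fun i => c i * (xs i (z + ∑ i : Fin n, b i • x i)) ^ 2) n]
        exact Finset.sum_congr rfl fun j _ => by rw [hlt b j]
      · exact tsum_congr fun i => by rw [hge b (i + n) (Nat.le_add_left n i)]
    rw [h1]; ring
  have hfun : h = fun b : Fin n → ℝ => ‖z + ∑ i : Fin n, b i • x i‖ ^ 2
        + (ε * ∑ j : Fin n, c (j : ℕ) * (xs (j : ℕ) z + b j) ^ 2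
           + ε * ∑' i : ℕ, c (i + n) * (xs (i + n) z) ^ 2) := funext hform
  subst hfun
  -- smoothness
  have hw2 : ContDiff ℝ 2 (fun b : Fin n → ℝ => z + ∑ i : Fin n, b i • x i) :=
    contDiff_const.add (ContDiff.sum fun i _ =>
      (contDiff_apply ℝ ℝ i).smul contDiff_const)
  have hQ2 : ContDiff ℝ 2 (fun b : Fin n → ℝ =>
      ε * ∑ j : Fin n, c (j : ℕ) * (xs (j : ℕ) z + b j) ^ 2
        + ε * ∑' i : ℕ, c (i + n) * (xs (i + n) z) ^ 2) :=
    (contDiff_const.mul (ContDiff.sum fun j _ =>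
      contDiff_const.mul ((contDiff_const.add (contDiff_apply ℝ ℝ j)).pow 2))).add
      contDiff_const
  have hnormCD : ∀ b : Fin n → ℝ, z + ∑ i : Fin n, b i • x i ≠ 0 →
      ContDiffAt ℝ 2 (fun b : Fin n → ℝ => ‖z + ∑ i : Fin n, b i • x i‖ ^ 2) b := by
    intro b hb
    have h1 : ContDiffAt ℝ 2 (fun u : X => ‖u‖) (z + ∑ i : Fin n, b i • x i) := by
      exact (hsmooth.of_le (WithTop.coe_le_coe.2 hk)).contDiffAt
        (isOpen_compl_singleton.mem_nhds hb)
    exact (h1.comp b hw2.contDiffAt).pow 2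
  have hCDat : ∀ b : Fin n → ℝ, z + ∑ i : Fin n, b i • x i ≠ 0 →
      ContDiffAt ℝ 2 (fun b : Fin n → ℝ => ‖z + ∑ i : Fin n, b i • x i‖ ^ 2
        + (ε * ∑ j : Fin n, c (j : ℕ) * (xs (j : ℕ) z + b j) ^ 2
           + ε * ∑' i : ℕ, c (i + n) * (xs (i + n) z) ^ 2)) b :=
    fun b hb => (hnormCD b hb).add hQ2.contDiffAt
  intro a ha
  refine ⟨hCDat a ha, ?_⟩
  set F : (Fin n → ℝ) → ℝ := fun b : Fin n → ℝ => ‖z + ∑ i : Fin n, b i • x i‖ ^ 2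
        + (ε * ∑ j : Fin n, c (j : ℕ) * (xs (j : ℕ) z + b j) ^ 2
           + ε * ∑' i : ℕ, c (i + n) * (xs (i + n) z) ^ 2) with hF
  set U : Set (Fin n → ℝ) := {b : Fin n → ℝ | z + ∑ i : Fin n, b i • x i ≠ 0} with hUdef
  have hUopen : IsOpen U := isOpen_compl_singleton.preimage hw2.continuous
  have hUa : a ∈ U := ha
  have hCDU : ∀ b ∈ U, ContDiffAt ℝ 2 F b := fun b hb => hCDat b hb
  have hsymm : IsSymmSndFDerivAt ℝ F a := (hCDat a ha).isSymmSndFDerivAt minSmoothness_of_isRCLikeNormedField.le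
  -- positivity of the quadratic form
  have hpos : ∀ v : Fin n → ℝ, v ≠ 0 → 0 < fderiv ℝ (fderiv ℝ F) a v v := by
    intro v hv
    have hline := aux_line_second_deriv hUopen hUa hCDU v
    set T : Set ℝ := (fun t : ℝ => a + t • v) ⁻¹' U with hTdef
    have hTopen : IsOpen T := hUopen.preimage
      (continuous_const.add (continuous_id.smul continuous_const))
    have hT0 : (0:ℝ) ∈ T := by
      show (a + (0:ℝ) • v) ∈ U
      simpa using hUa
    set φB : ℝ → ℝ := fun t : ℝ => ‖z + ∑ i : Fin n, (a + t • v) i • x i‖ ^ 2 with hφBdef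
    have hlineCD : ContDiff ℝ 2 (fun t : ℝ => a + t • v) :=
      contDiff_const.add (contDiff_id.smul contDiff_const)
    have hφBCD : ∀ t ∈ T, ContDiffAt ℝ 2 φB t := by
      intro t ht
      exact (hnormCD _ ht).comp t hlineCD.contDiffAt
    have hφBdiff : ∀ t ∈ T, DifferentiableAt ℝ φB t :=
      fun t ht => (hφBCD t ht).differentiableAt two_ne_zero
    -- the polynomial part
    have hterm : ∀ (j : Fin n) (t : ℝ),
        HasDerivAt (fun t : ℝ => c (j : ℕ) * ((xs (j : ℕ) z + a j) + t * v j) ^ 2)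
          (2 * c (j : ℕ) * v j * ((xs (j : ℕ) z + a j) + t * v j)) t := by
      intro j t
      have h1 : HasDerivAt (fun t : ℝ => (xs (j : ℕ) z + a j) + t * v j) (v j) t := by
        simpa using ((hasDerivAt_id t).mul_const (v j)).const_add ((xs (j : ℕ)) z + a j)
      have h2 := (h1.pow 2).const_mul (c (j : ℕ))
      exact h2.congr_deriv (by push_cast; ring)
    have hφQeq : (fun t : ℝ => ε * ∑ j : Fin n, c (j : ℕ) * (xs (j : ℕ) z + (a + t • v) j) ^ 2
          + ε * ∑' i : ℕ, c (i + n) * (xs (i + n) z) ^ 2)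
        = fun t : ℝ => ε * (∑ j : Fin n, c (j : ℕ) * ((xs (j : ℕ) z + a j) + t * v j) ^ 2)
          + ε * ∑' i : ℕ, c (i + n) * (xs (i + n) z) ^ 2 := by
      funext t
      simp only [Pi.add_apply, Pi.smul_apply, smul_eq_mul, add_assoc]
    have hQder : ∀ t : ℝ, HasDerivAt (fun t : ℝ =>
        ε * ∑ j : Fin n, c (j : ℕ) * (xs (j : ℕ) z + (a + t • v) j) ^ 2
          + ε * ∑' i : ℕ, c (i + n) * (xs (i + n) z) ^ 2)
        (ε * ∑ j : Fin n, 2 * c (j : ℕ) * v j * ((xs (j : ℕ) z + a j) + t * v j)) t := by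
      intro t
      rw [hφQeq]
      exact ((HasDerivAt.fun_sum (fun j _ => hterm j t)).const_mul ε).add_const _
    have hQder2 : HasDerivAt (fun t : ℝ =>
        ε * ∑ j : Fin n, 2 * c (j : ℕ) * v j * ((xs (j : ℕ) z + a j) + t * v j))
        (ε * ∑ j : Fin n, 2 * c (j : ℕ) * v j * v j) 0 := by
      refine HasDerivAt.const_mul ε (HasDerivAt.fun_sum fun j _ => ?_)
      have h1 : HasDerivAt (fun t : ℝ => (xs (j : ℕ) z + a j) + t * v j) (v j) 0 := by
        simpa using ((hasDerivAt_id (0:ℝ)).mul_const (v j)).const_add ((xs (j : ℕ)) z + a j)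
      exact h1.const_mul (2 * c (j : ℕ) * v j)
    have hφsplit : (fun t : ℝ => F (a + t • v)) = fun t : ℝ => φB t
        + (ε * ∑ j : Fin n, c (j : ℕ) * (xs (j : ℕ) z + (a + t • v) j) ^ 2
           + ε * ∑' i : ℕ, c (i + n) * (xs (i + n) z) ^ 2) := by
      funext t
      rw [hF, hφBdef]
    have hev : deriv (fun t : ℝ => F (a + t • v)) =ᶠ[𝓝 (0:ℝ)]
        fun t : ℝ => deriv φB t
          + ε * ∑ j : Fin n, 2 * c (j : ℕ) * v j * ((xs (j : ℕ) z + a j) + t * v j) := by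
      filter_upwards [hTopen.mem_nhds hT0] with t ht
      rw [hφsplit, deriv_fun_add (hφBdiff t ht) (hQder t).differentiableAt, (hQder t).deriv]
    have hd1 : DifferentiableAt ℝ (deriv φB) 0 := aux_diff_deriv' (hφBCD 0 hT0)
    have hmain : deriv (deriv (fun t : ℝ => F (a + t • v))) 0
        = deriv (deriv φB) 0 + ε * ∑ j : Fin n, 2 * c (j : ℕ) * v j * v j := by
      rw [hev.deriv_eq, deriv_fun_add hd1 hQder2.differentiableAt, hQder2.deriv]
    -- convexity of φB
    have hwline : ∀ t : ℝ, z + ∑ i : Fin n, (a + t • v) i • x i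
        = (z + ∑ i : Fin n, a i • x i) + t • (∑ i : Fin n, v i • x i) := by
      intro t
      simp only [Pi.add_apply, Pi.smul_apply, smul_eq_mul, add_smul, mul_smul]
      rw [Finset.sum_add_distrib, Finset.smul_sum]
      abel
    have hconvB : ConvexOn ℝ Set.univ φB := by
      refine ⟨convex_univ, ?_⟩
      intro p _ q _ lam mu hlam hmu hlm
      have e1 : φB p = ‖(z + ∑ i : Fin n, a i • x i) + p • (∑ i : Fin n, v i • x i)‖ ^ 2 := by
        show ‖z + ∑ i : Fin n, (a + p • v) i • x i‖ ^ 2 = _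
        rw [hwline p]
      have e2 : φB q = ‖(z + ∑ i : Fin n, a i • x i) + q • (∑ i : Fin n, v i • x i)‖ ^ 2 := by
        show ‖z + ∑ i : Fin n, (a + q • v) i • x i‖ ^ 2 = _
        rw [hwline q]
      have hu : lam • (z + ∑ i : Fin n, a i • x i) + mu • (z + ∑ i : Fin n, a i • x i)
          = z + ∑ i : Fin n, a i • x i := by
        rw [← add_smul, hlm, one_smul]
      have e3 : φB (lam • p + mu • q)
          = ‖lam • ((z + ∑ i : Fin n, a i • x i) + p • (∑ i : Fin n, v i • x i))
             + mu • ((z + ∑ i : Fin n, a i • x i) + q • (∑ i : Fin n, v i • x i))‖ ^ 2 := by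
        show ‖z + ∑ i : Fin n, (a + (lam • p + mu • q) • v) i • x i‖ ^ 2 = _
        rw [hwline (lam • p + mu • q)]
        have hkey : (z + ∑ i : Fin n, a i • x i)
              + (lam • p + mu • q) • (∑ i : Fin n, v i • x i)
            = lam • ((z + ∑ i : Fin n, a i • x i) + p • (∑ i : Fin n, v i • x i))
             + mu • ((z + ∑ i : Fin n, a i • x i) + q • (∑ i : Fin n, v i • x i)) := by
          have hlam' : lam = 1 - mu := by linarith
          subst hlam'
          simp only [smul_eq_mul]
          module
        rw [hkey]
      rw [e1, e2, e3]
      have htri : ‖lam • ((z + ∑ i : Fin n, a i • x i) + p • (∑ i : Fin n, v i • x i))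
             + mu • ((z + ∑ i : Fin n, a i • x i) + q • (∑ i : Fin n, v i • x i))‖
          ≤ lam * ‖(z + ∑ i : Fin n, a i • x i) + p • (∑ i : Fin n, v i • x i)‖
            + mu * ‖(z + ∑ i : Fin n, a i • x i) + q • (∑ i : Fin n, v i • x i)‖ := by
        refine (norm_add_le _ _).trans ?_
        rw [norm_smul, norm_smul, Real.norm_eq_abs, Real.norm_eq_abs,
          abs_of_nonneg hlam, abs_of_nonneg hmu]
      have h0 := norm_nonneg (lam • ((z + ∑ i : Fin n, a i • x i) + p • (∑ i : Fin n, v i • x i))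
             + mu • ((z + ∑ i : Fin n, a i • x i) + q • (∑ i : Fin n, v i • x i)))
      have hA0 := norm_nonneg ((z + ∑ i : Fin n, a i • x i) + p • (∑ i : Fin n, v i • x i))
      have hB0 := norm_nonneg ((z + ∑ i : Fin n, a i • x i) + q • (∑ i : Fin n, v i • x i))
      simp only [smul_eq_mul]
      nlinarith [htri, h0, hA0, hB0, hlam, hmu, hlm, mul_nonneg hlam hmu,
        sq_nonneg (‖(z + ∑ i : Fin n, a i • x i) + p • (∑ i : Fin n, v i • x i)‖
          - ‖(z + ∑ i : Fin n, a i • x i) + q • (∑ i : Fin n, v i • x i)‖)]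
    have hφB2 : 0 ≤ deriv (deriv φB) 0 :=
      aux_second_deriv_nonneg' hTopen hT0 hconvB hφBCD
    have hsumpos : 0 < ∑ j : Fin n, 2 * c (j : ℕ) * v j * v j := by
      obtain ⟨j0, hj0⟩ : ∃ j, v j ≠ 0 := by
        by_contra hno; push_neg at hno; exact hv (funext fun j => hno j)
      refine Finset.sum_pos' (fun j _ => ?_) ⟨j0, Finset.mem_univ j0, ?_⟩
      · nlinarith [(hc (j : ℕ)).le, sq_nonneg (v j)]
      · have hvv : 0 < v j0 * v j0 := mul_self_pos.2 hj0
        nlinarith [hc (j0 : ℕ)]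
    rw [← hline, hmain]
    nlinarith [mul_pos hε hsumpos, hφB2]
  -- assemble the PosDef statement
  rw [Matrix.posDef_iff_dotProduct_mulVec]
  constructor
  · -- Hermitian (symmetric) part
    ext i j
    simp only [Matrix.conjTranspose_apply, Matrix.of_apply, star_trivial]
    rw [iteratedFDeriv_two_apply, iteratedFDeriv_two_apply]
    simp only [Matrix.cons_val_zero, Matrix.cons_val_one, Matrix.head_cons]
    exact hsymm _ _
  · intro v hv
    have hvsum : v = ∑ i : Fin n, v i • (Pi.single i 1 : Fin n → ℝ) := by
      funext j
      rw [Finset.sum_apply]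
      simp [Pi.single_apply, Finset.sum_ite_eq]
    have hBvv : iteratedFDeriv ℝ 2 F a ![v, v]
        = ∑ i, ∑ j, (v i * v j) * iteratedFDeriv ℝ 2 F a ![Pi.single i 1, Pi.single j 1] := by
      conv_lhs => rw [hvsum]
      exact aux_bilin_expand _ v _
    have hDvv : iteratedFDeriv ℝ 2 F a ![v, v] = fderiv ℝ (fderiv ℝ F) a v v := by
      rw [iteratedFDeriv_two_apply]
      simp only [Matrix.cons_val_zero, Matrix.cons_val_one, Matrix.head_cons]
    have hexp : dotProduct (star v)
        (Matrix.mulVec (Matrix.of fun i j : Fin n =>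
          iteratedFDeriv ℝ 2 F a ![Pi.single i 1, Pi.single j 1]) v)
        = ∑ i, ∑ j, (v i * v j) * iteratedFDeriv ℝ 2 F a ![Pi.single i 1, Pi.single j 1] := by
      simp only [star_trivial, dotProduct, Matrix.mulVec, Matrix.of_apply]
      refine Finset.sum_congr rfl fun i _ => ?_
      rw [Finset.mul_sum]
      refine Finset.sum_congr rfl fun j _ => ?_
      ring
    rw [hexp, ← hBvv, hDvv]
    exact hpos v hv
end

section
/- There exists a norm N on ℝ² such that: (a) N is infinitely Fréchet differentiable at every point of ℝ² ∖ {(0,0)}; (b) N(−a, b) = N(a, b) = N(b, a) for all a, b ∈ ℝ; and (c) N(1, −1/2) = N(1, 0) = N(1, 1/2) = 1, i.e. the points (1, −1/2), (1, 0), (1, 1/2) all lie on the unit sphere of (ℝ², N). -/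
noncomputable section
namespace SNP

open Real Set Filter Topology

lemma expNegInvGlue_mono : Monotone expNegInvGlue := by
  intro x y hxy
  rcases le_or_gt x 0 with hx | hx
  · rw [expNegInvGlue.zero_of_nonpos hx]; exact expNegInvGlue.nonneg y
  · have hy : 0 < y := lt_of_lt_of_le hx hxy
    rw [expNegInvGlue, expNegInvGlue, if_neg (not_le.2 hx), if_neg (not_le.2 hy)]
    apply Real.exp_le_exp.2
    have := one_div_le_one_div_of_le hx hxy
    simp only [one_div] at this
    linarith

lemma smoothTransition_mono : Monotone Real.smoothTransition := by
  intro x y hxy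
  unfold Real.smoothTransition
  rw [div_le_div_iff₀ (Real.smoothTransition.pos_denom x) (Real.smoothTransition.pos_denom y)]
  have h1 := expNegInvGlue_mono hxy
  have h2 := expNegInvGlue_mono (by linarith : 1 - y ≤ 1 - x)
  nlinarith [expNegInvGlue.nonneg x, expNegInvGlue.nonneg (1 - y), expNegInvGlue.nonneg y,
    expNegInvGlue.nonneg (1 - x)]

lemma deriv_nonneg_of_monotone {f : ℝ → ℝ} {d t : ℝ} (hm : Monotone f)
    (h : HasDerivAt f d t) : 0 ≤ d := by
  have h' := hasDerivAt_iff_tendsto_slope.1 h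
  have h2 : Tendsto (slope f t) (𝓝[>] t) (𝓝 d) :=
    h'.mono_left (nhdsWithin_mono t fun y hy => ne_of_gt hy)
  refine ge_of_tendsto h2 ?_
  filter_upwards [self_mem_nhdsWithin] with y hy
  have : t < y := hy
  rw [slope_def_field]
  have h3 := hm this.le
  have hpos : 0 < y - t := by linarith
  exact div_nonneg (by linarith) hpos.le

def step (s : ℝ) : ℝ := Real.smoothTransition (8 * (s - 1/2))

lemma step_contDiff : ContDiff ℝ (⊤ : ℕ∞) step :=
  Real.smoothTransition.contDiff.comp ((contDiff_const.mul (contDiff_id.sub contDiff_const)))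

lemma step_cont : Continuous step := step_contDiff.continuous

lemma step_nonneg (s : ℝ) : 0 ≤ step s := Real.smoothTransition.nonneg _
lemma step_le_one (s : ℝ) : step s ≤ 1 := Real.smoothTransition.le_one _
lemma step_zero {s : ℝ} (h : s ≤ 1/2) : step s = 0 :=
  Real.smoothTransition.zero_of_nonpos (by linarith)
lemma step_one {s : ℝ} (h : 3/4 ≤ s) : step s = 1 :=
  Real.smoothTransition.one_of_one_le (by linarith)
lemma step_mono : Monotone step := fun x y h =>
  smoothTransition_mono (by simp only [mul_sub]; linarith)

def cc : ℝ := ∫ s in (1/2:ℝ)..(3/4:ℝ), step s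

lemma cc_nonneg : 0 ≤ cc :=
  intervalIntegral.integral_nonneg (by norm_num) (fun s _ => step_nonneg s)

lemma cc_le : cc ≤ 1/4 := by
  have h := intervalIntegral.integral_mono_on (by norm_num : (1/2:ℝ) ≤ 3/4)
    (step_cont.intervalIntegrable _ _) (intervalIntegrable_const (c := (1:ℝ)) (μ := MeasureTheory.volume))
    (fun s _ => step_le_one s)
  rw [intervalIntegral.integral_const, smul_eq_mul] at h
  rw [cc]
  linarith

lemma denom_pos : 0 < 7 - 4 * cc := by nlinarith [cc_le]

def al : ℝ := 4 / (7 - 4 * cc)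

lemma al_pos : 0 < al := div_pos (by norm_num) denom_pos

def w (s : ℝ) : ℝ := al * step s

lemma w_contDiff : ContDiff ℝ (⊤ : ℕ∞) w := contDiff_const.mul step_contDiff
lemma w_cont : Continuous w := w_contDiff.continuous
lemma w_nonneg (s : ℝ) : 0 ≤ w s := mul_nonneg al_pos.le (step_nonneg s)
lemma w_mono : Monotone w := fun x y h => mul_le_mul_of_nonneg_left (step_mono h) al_pos.le
lemma w_zero {s : ℝ} (h : s ≤ 1/2) : w s = 0 := by rw [w, step_zero h, mul_zero]
lemma w_al {s : ℝ} (h : 3/4 ≤ s) : w s = al := by rw [w, step_one h, mul_one]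

def G (u : ℝ) : ℝ := 1 + ∫ s in (1/2:ℝ)..u, w s

lemma G_hasDeriv (u : ℝ) : HasDerivAt G (w u) u := by
  have := intervalIntegral.integral_hasDerivAt_right
    (w_cont.intervalIntegrable (1/2) u)
    (w_cont.stronglyMeasurable.stronglyMeasurableAtFilter)
    w_cont.continuousAt
  exact (this.const_add 1)

lemma deriv_G : deriv G = w := funext fun u => (G_hasDeriv u).deriv

lemma G_contDiff : ContDiff ℝ (⊤ : ℕ∞) G := by
  rw [contDiff_infty_iff_deriv]
  exact ⟨fun u => (G_hasDeriv u).differentiableAt, deriv_G ▸ w_contDiff⟩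

lemma G_one {u : ℝ} (h : u ≤ 1/2) : G u = 1 := by
  have : (∫ s in (1/2:ℝ)..u, w s) = ∫ s in (1/2:ℝ)..u, (0:ℝ) := by
    apply intervalIntegral.integral_congr
    intro s hs
    rw [Set.uIcc_of_ge h] at hs
    exact w_zero hs.2
  rw [G, this, intervalIntegral.integral_zero, add_zero]

lemma G_ge_one (u : ℝ) : 1 ≤ G u := by
  rcases le_or_gt u (1/2) with h | h
  · exact (G_one h).ge
  · have : 0 ≤ ∫ s in (1/2:ℝ)..u, w s :=
      intervalIntegral.integral_nonneg h.le (fun s _ => w_nonneg s)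
    simp only [G]; linarith

lemma G_aff {u : ℝ} (h : 3/4 ≤ u) : G u = al * (1 + u) := by
  have hsplit : (∫ s in (1/2:ℝ)..(3/4:ℝ), w s) + (∫ s in (3/4:ℝ)..u, w s)
      = ∫ s in (1/2:ℝ)..u, w s :=
    intervalIntegral.integral_add_adjacent_intervals
      (w_cont.intervalIntegrable _ _) (w_cont.intervalIntegrable _ _)
  have h1 : (∫ s in (1/2:ℝ)..(3/4:ℝ), w s) = al * cc := by
    simp only [w, cc]; exact intervalIntegral.integral_const_mul _ _
  have h2 : (∫ s in (3/4:ℝ)..u, w s) = (u - 3/4) * al := by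
    have : (∫ s in (3/4:ℝ)..u, w s) = ∫ s in (3/4:ℝ)..u, al := by
      apply intervalIntegral.integral_congr
      intro s hs
      rw [Set.uIcc_of_le h] at hs
      exact w_al hs.1
    rw [this]; simp [smul_eq_mul]
  have hd := denom_pos
  rw [G, ← hsplit, h1, h2, al]
  field_simp
  ring
def g (t : ℝ) : ℝ := G |t|

lemma g_even (t : ℝ) : g (-t) = g t := by rw [g, g, abs_neg]

lemma g_one {t : ℝ} (h : |t| ≤ 1/2) : g t = 1 := G_one h

lemma g_ge_one (t : ℝ) : 1 ≤ g t := G_ge_one _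

lemma g_pos (t : ℝ) : 0 < g t := lt_of_lt_of_le one_pos (g_ge_one t)

lemma g_aff {t : ℝ} (h : 3/4 ≤ |t|) : g t = al * (1 + |t|) := G_aff h

lemma g_eq_G_on_pos {t : ℝ} (ht : 0 < t) : g =ᶠ[nhds t] G := by
  filter_upwards [lt_mem_nhds ht] with x hx
  rw [g, abs_of_pos hx]

lemma g_eq_Gneg_on_neg {t : ℝ} (ht : t < 0) : g =ᶠ[nhds t] (fun x => G (-x)) := by
  filter_upwards [gt_mem_nhds ht] with x hx
  rw [g, abs_of_neg hx]

lemma g_eq_one_near_zero : g =ᶠ[nhds (0:ℝ)] (fun _ => (1:ℝ)) := by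
  filter_upwards [(isOpen_Ioo.mem_nhds (by norm_num : (0:ℝ) ∈ Ioo (-(1/2):ℝ) (1/2)))] with x hx
  exact g_one (abs_le.2 ⟨hx.1.le, hx.2.le⟩)

lemma g_contDiff : ContDiff ℝ (⊤ : ℕ∞) g := by
  rw [contDiff_iff_contDiffAt]
  intro t
  rcases lt_trichotomy t 0 with ht | rfl | ht
  · exact (G_contDiff.contDiffAt.comp t (contDiff_neg.contDiffAt)).congr_of_eventuallyEq
      (g_eq_Gneg_on_neg ht)
  · exact contDiffAt_const.congr_of_eventuallyEq g_eq_one_near_zero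
  · exact G_contDiff.contDiffAt.congr_of_eventuallyEq (g_eq_G_on_pos ht)

lemma g_diff : Differentiable ℝ g := g_contDiff.differentiable (by simp)

lemma g_hasDeriv (t : ℝ) : HasDerivAt g (deriv g t) t := (g_diff t).hasDerivAt

lemma dg_contDiff : ContDiff ℝ (⊤ : ℕ∞) (deriv g) := (contDiff_infty_iff_deriv.1 g_contDiff).2

lemma dg_diff : Differentiable ℝ (deriv g) := dg_contDiff.differentiable (by simp)

lemma dg_hasDeriv (t : ℝ) : HasDerivAt (deriv g) (deriv (deriv g) t) t := (dg_diff t).hasDerivAt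

lemma w_diff : Differentiable ℝ w := w_contDiff.differentiable (by simp)

lemma g2_nonneg (t : ℝ) : 0 ≤ deriv (deriv g) t := by
  rcases lt_trichotomy t 0 with ht | rfl | ht
  · have hev : deriv g =ᶠ[nhds t] (fun x => -(w (-x))) := by
      filter_upwards [gt_mem_nhds ht] with x hx
      have h1 : HasDerivAt (fun y => G (-y)) (w (-x) * (-1)) x :=
        (G_hasDeriv (-x)).comp x (hasDerivAt_neg x)
      have h2 : HasDerivAt g (w (-x) * (-1)) x :=
        h1.congr_of_eventuallyEq (g_eq_Gneg_on_neg hx)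
      rw [h2.deriv]; ring
    rw [hev.deriv_eq]
    have h3 : HasDerivAt (fun x => -(w (-x))) (deriv w (-t)) t := by
      have := ((w_diff (-t)).hasDerivAt.comp t (hasDerivAt_neg t)).neg
      exact this.congr_deriv (by ring)
    rw [h3.deriv]
    exact deriv_nonneg_of_monotone w_mono (w_diff (-t)).hasDerivAt
  · have hev : deriv g =ᶠ[nhds (0:ℝ)] (fun _ => (0:ℝ)) := by
      filter_upwards [(isOpen_Ioo.mem_nhds (by norm_num : (0:ℝ) ∈ Ioo (-(1/2):ℝ) (1/2)))] with x hx
      have h2 : HasDerivAt g 0 x := by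
        refine (hasDerivAt_const x (1:ℝ)).congr_of_eventuallyEq ?_
        filter_upwards [(isOpen_Ioo.mem_nhds (hx : x ∈ Ioo (-(1/2):ℝ) (1/2)))] with y hy
        exact g_one (abs_le.2 ⟨hy.1.le, hy.2.le⟩)
      exact h2.deriv
    rw [hev.deriv_eq]
    simp
  · have hev : deriv g =ᶠ[nhds t] w := by
      filter_upwards [lt_mem_nhds ht] with x hx
      have h2 : HasDerivAt g (w x) x := (G_hasDeriv x).congr_of_eventuallyEq (g_eq_G_on_pos hx)
      rw [h2.deriv]
    rw [hev.deriv_eq]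
    exact deriv_nonneg_of_monotone w_mono (w_diff t).hasDerivAt
def Nf (p : ℝ × ℝ) : ℝ := if |p.2| ≤ |p.1| then |p.1| * g (p.2/p.1) else |p.2| * g (p.1/p.2)

lemma Nf_pair (a b : ℝ) :
    Nf (a, b) = if |b| ≤ |a| then |a| * g (b/a) else |b| * g (a/b) := rfl

lemma Nf_zero : Nf 0 = 0 := by
  show Nf (0, 0) = 0
  rw [Nf_pair, if_pos le_rfl]
  simp

lemma Nf_nonneg (p : ℝ × ℝ) : 0 ≤ Nf p := by
  rw [Nf]
  split
  · exact mul_nonneg (abs_nonneg _) (g_pos _).le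
  · exact mul_nonneg (abs_nonneg _) (g_pos _).le

lemma Nf_neg_fst (a b : ℝ) : Nf (-a, b) = Nf (a, b) := by
  rw [Nf_pair, Nf_pair, abs_neg]
  split
  · rw [div_neg, g_even]
  · rw [neg_div, g_even]

lemma Nf_swap (a b : ℝ) : Nf (b, a) = Nf (a, b) := by
  rw [Nf_pair, Nf_pair]
  rcases lt_trichotomy |a| |b| with h | h | h
  · rw [if_pos h.le, if_neg (not_le.2 h)]
  · rcases abs_eq_abs.1 h.symm with rfl | rfl
    · simp
    · simp [abs_neg, div_neg, neg_div, g_even]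
  · rw [if_neg (not_le.2 h), if_pos h.le]

lemma Nf_neg_snd (a b : ℝ) : Nf (a, -b) = Nf (a, b) := by
  rw [← Nf_swap, Nf_neg_fst, Nf_swap]

lemma Nf_smul (k : ℝ) (p : ℝ × ℝ) : Nf (k • p) = |k| * Nf p := by
  obtain ⟨a, b⟩ := p
  rcases eq_or_ne k 0 with rfl | hk
  · simp [Nf_zero]
  · have hsm : k • ((a, b) : ℝ × ℝ) = (k * a, k * b) := rfl
    rw [hsm, Nf_pair, Nf_pair]
    have hcond : (|k * b| ≤ |k * a|) ↔ (|b| ≤ |a|) := by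
      rw [abs_mul, abs_mul]
      exact mul_le_mul_iff_right₀ (abs_pos.2 hk)
    have h1 : k * b / (k * a) = b / a := mul_div_mul_left b a hk
    have h2 : k * a / (k * b) = a / b := mul_div_mul_left a b hk
    split
    · rw [if_pos (hcond.1 (by assumption)), h1, abs_mul]; ring
    · rw [if_neg (fun hc => (by assumption : ¬ _) (hcond.2 hc)), h2, abs_mul]; ring

lemma Nf_eq_zero {p : ℝ × ℝ} (h : Nf p = 0) : p = 0 := by
  obtain ⟨a, b⟩ := p
  rw [Nf_pair] at h
  split at h
  · have ha : |a| = 0 := by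
      rcases mul_eq_zero.1 h with h' | h'
      · exact h'
      · exact absurd h' (g_pos _).ne'
    have hb : |b| = 0 := le_antisymm (ha ▸ (by assumption)) (abs_nonneg b)
    have : a = 0 := abs_eq_zero.1 ha
    have : b = 0 := abs_eq_zero.1 hb
    simp_all [Prod.ext_iff]
  · have hb : |b| = 0 := by
      rcases mul_eq_zero.1 h with h' | h'
      · exact h'
      · exact absurd h' (g_pos _).ne'
    have : ¬ |b| ≤ |a| := by assumption
    have : |b| ≠ 0 := fun hc => this (hc ▸ abs_nonneg a)
    exact absurd hb this

lemma Nf_one_t {t : ℝ} (h : |t| ≤ 1/2) : Nf (1, t) = 1 := by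
  rw [Nf_pair, if_pos (by rw [abs_one]; linarith), abs_one, one_mul, div_one, g_one h]
def V : Set (ℝ × ℝ) := {q | 0 < q.1 ∧ |q.2| < (4/3) * q.1}

lemma V_open : IsOpen V :=
  (isOpen_lt continuous_const continuous_fst).inter
    (isOpen_lt (continuous_abs.comp continuous_snd) (continuous_const.mul continuous_fst))

def chart (q : ℝ × ℝ) : ℝ := q.1 * g (q.2 / q.1)

lemma chart_eq {q : ℝ × ℝ} (hq : q ∈ V) : Nf q = chart q := by
  obtain ⟨a, b⟩ := q
  obtain ⟨ha, hab⟩ := hq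
  simp only at ha hab
  show Nf (a, b) = a * g (b / a)
  rw [Nf_pair]
  rcases le_or_gt |b| |a| with h | h
  · rw [if_pos h, abs_of_pos ha]
  · rw [if_neg (not_le.2 h)]
    have ha' : |a| = a := abs_of_pos ha
    have hb : 0 < |b| := lt_of_le_of_lt (abs_nonneg a) h
    have hb' : b ≠ 0 := abs_pos.1 hb
    have h1 : (3:ℝ)/4 ≤ |b / a| := by
      rw [abs_div, ha']
      rw [le_div_iff₀ ha]
      nlinarith [ha'.ge.trans h.le]
    have h2 : (3:ℝ)/4 ≤ |a / b| := by
      rw [abs_div, ha']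
      rw [le_div_iff₀ hb]
      nlinarith
    rw [g_aff h1, g_aff h2, abs_div, abs_div, ha']
    have f1 : |b| * (1 + a / |b|) = |b| + a := by field_simp
    have f2 : a * (1 + |b| / a) = a + |b| := by field_simp
    calc |b| * (al * (1 + a / |b|)) = al * (|b| * (1 + a / |b|)) := by ring
      _ = al * (|b| + a) := by rw [f1]
      _ = a * (al * (1 + |b| / a)) := by rw [show al * (|b| + a) = al * (a + |b|) by ring, ← f2]; ring

lemma chart_contDiffAt {q : ℝ × ℝ} (hq : 0 < q.1) : ContDiffAt ℝ (⊤ : ℕ∞) chart q :=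
  (contDiff_fst.contDiffAt).mul
    (g_contDiff.contDiffAt.comp q ((contDiff_snd.contDiffAt).div (contDiff_fst.contDiffAt) hq.ne'))

lemma loc {p : ℝ × ℝ} (hp : p ≠ 0) :
    ∃ L : ℝ × ℝ →L[ℝ] ℝ × ℝ, L p ∈ V ∧ ∀ᶠ q in nhds p, Nf q = chart (L q) := by
  obtain ⟨a, b⟩ := p
  rcases le_or_gt |b| |a| with hba | hba
  · have ha : a ≠ 0 := by
      intro h0
      apply hp
      rw [h0] at hba
      simp only [abs_zero, abs_nonpos_iff] at hba
      simp [h0, hba, Prod.ext_iff]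
    rcases ha.lt_or_gt with haneg | hapos
    · refine ⟨(-(ContinuousLinearMap.fst ℝ ℝ ℝ)).prod (ContinuousLinearMap.snd ℝ ℝ ℝ), ?_, ?_⟩
      · constructor
        · simpa using by linarith
        · show |b| < (4/3) * (-a)
          rw [abs_of_neg haneg] at hba
          linarith
      · have hmem : ((-(ContinuousLinearMap.fst ℝ ℝ ℝ)).prod
            (ContinuousLinearMap.snd ℝ ℝ ℝ)) ⁻¹' V ∈ nhds ((a, b) : ℝ × ℝ) := by
          apply (V_open.preimage (ContinuousLinearMap.continuous _)).mem_nhds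
          constructor
          · simpa using by linarith
          · show |b| < (4/3) * (-a)
            rw [abs_of_neg haneg] at hba
            linarith
        filter_upwards [hmem] with q hq
        exact (Nf_neg_fst q.1 q.2).symm.trans (chart_eq hq)
    · refine ⟨ContinuousLinearMap.id ℝ (ℝ × ℝ), ⟨hapos, ?_⟩, ?_⟩
      · show |b| < (4/3) * a
        rw [abs_of_pos hapos] at hba
        linarith
      · have hmem : V ∈ nhds ((a, b) : ℝ × ℝ) := by
          apply V_open.mem_nhds
          refine ⟨hapos, ?_⟩
          show |b| < (4/3) * a
          rw [abs_of_pos hapos] at hba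
          linarith
        filter_upwards [hmem] with q hq
        exact chart_eq hq
  · have hb : b ≠ 0 := by
      intro h0
      rw [h0] at hba
      simp only [abs_zero] at hba
      exact absurd hba (not_lt.2 (abs_nonneg a))
    rcases hb.lt_or_gt with hbneg | hbpos
    · refine ⟨(-(ContinuousLinearMap.snd ℝ ℝ ℝ)).prod (ContinuousLinearMap.fst ℝ ℝ ℝ), ?_, ?_⟩
      · constructor
        · simpa using by linarith
        · show |a| < (4/3) * (-b)
          rw [abs_of_neg hbneg] at hba
          linarith
      · have hmem : ((-(ContinuousLinearMap.snd ℝ ℝ ℝ)).prod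
            (ContinuousLinearMap.fst ℝ ℝ ℝ)) ⁻¹' V ∈ nhds ((a, b) : ℝ × ℝ) := by
          apply (V_open.preimage (ContinuousLinearMap.continuous _)).mem_nhds
          constructor
          · simpa using by linarith
          · show |a| < (4/3) * (-b)
            rw [abs_of_neg hbneg] at hba
            linarith
        filter_upwards [hmem] with q hq
        exact ((Nf_neg_fst q.2 q.1).trans (Nf_swap q.1 q.2)).symm.trans (chart_eq hq)
    · refine ⟨(ContinuousLinearMap.snd ℝ ℝ ℝ).prod (ContinuousLinearMap.fst ℝ ℝ ℝ), ?_, ?_⟩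
      · constructor
        · simpa using hbpos
        · show |a| < (4/3) * b
          rw [abs_of_pos hbpos] at hba
          linarith
      · have hmem : ((ContinuousLinearMap.snd ℝ ℝ ℝ).prod
            (ContinuousLinearMap.fst ℝ ℝ ℝ)) ⁻¹' V ∈ nhds ((a, b) : ℝ × ℝ) := by
          apply (V_open.preimage (ContinuousLinearMap.continuous _)).mem_nhds
          constructor
          · simpa using hbpos
          · show |a| < (4/3) * b
            rw [abs_of_pos hbpos] at hba
            linarith
        filter_upwards [hmem] with q hq
        exact (Nf_swap q.1 q.2).symm.trans (chart_eq hq)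

lemma Nf_contDiffAt {p : ℝ × ℝ} (hp : p ≠ 0) : ContDiffAt ℝ (⊤ : ℕ∞) Nf p := by
  obtain ⟨L, hm, hev⟩ := loc hp
  have h1 : ContDiffAt ℝ (⊤ : ℕ∞) (fun q => chart (L q)) p :=
    (chart_contDiffAt hm.1).comp p L.contDiff.contDiffAt
  exact h1.congr_of_eventuallyEq hev
lemma psi_deriv (a b c d t : ℝ) (h : 0 < a + t*c) :
    HasDerivAt (fun s => (a+s*c) * g ((b+s*d)/(a+s*c)))
      (c * g ((b+t*d)/(a+t*c)) + deriv g ((b+t*d)/(a+t*c)) * ((d*a - c*b)/(a+t*c))) t := by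
  have hq : HasDerivAt (fun s : ℝ => a + s*c) c t := by
    simpa using ((hasDerivAt_id t).mul_const c).const_add a
  have hr : HasDerivAt (fun s : ℝ => b + s*d) d t := by
    simpa using ((hasDerivAt_id t).mul_const d).const_add b
  have hz : HasDerivAt (fun s : ℝ => (b+s*d)/(a+s*c))
      ((d*(a+t*c) - (b+t*d)*c)/(a+t*c)^2) t := hr.div hq h.ne'
  have hg : HasDerivAt (fun s : ℝ => g ((b+s*d)/(a+s*c)))
      (deriv g ((b+t*d)/(a+t*c)) * ((d*(a+t*c) - (b+t*d)*c)/(a+t*c)^2)) t :=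
    HasDerivAt.comp (h₂ := g) t (g_hasDeriv ((b+t*d)/(a+t*c))) hz
  have hmul := hq.mul hg
  refine hmul.congr_deriv ?_
  field_simp
  ring

lemma chi_deriv (a b c d t : ℝ) (h : 0 < a + t*c) :
    HasDerivAt (fun s => c * g ((b+s*d)/(a+s*c))
        + deriv g ((b+s*d)/(a+s*c)) * ((d*a - c*b)/(a+s*c)))
      (deriv (deriv g) ((b+t*d)/(a+t*c)) * (d*a - c*b)^2 / (a+t*c)^3) t := by
  have hq : HasDerivAt (fun s : ℝ => a + s*c) c t := by
    simpa using ((hasDerivAt_id t).mul_const c).const_add a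
  have hr : HasDerivAt (fun s : ℝ => b + s*d) d t := by
    simpa using ((hasDerivAt_id t).mul_const d).const_add b
  have hz : HasDerivAt (fun s : ℝ => (b+s*d)/(a+s*c))
      ((d*(a+t*c) - (b+t*d)*c)/(a+t*c)^2) t := hr.div hq h.ne'
  have hg : HasDerivAt (fun s : ℝ => g ((b+s*d)/(a+s*c)))
      (deriv g ((b+t*d)/(a+t*c)) * ((d*(a+t*c) - (b+t*d)*c)/(a+t*c)^2)) t :=
    HasDerivAt.comp (h₂ := g) t (g_hasDeriv ((b+t*d)/(a+t*c))) hz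
  have hdg : HasDerivAt (fun s : ℝ => deriv g ((b+s*d)/(a+s*c)))
      (deriv (deriv g) ((b+t*d)/(a+t*c)) * ((d*(a+t*c) - (b+t*d)*c)/(a+t*c)^2)) t :=
    HasDerivAt.comp (h₂ := deriv g) t (dg_hasDeriv ((b+t*d)/(a+t*c))) hz
  have hk : HasDerivAt (fun s : ℝ => (d*a - c*b)/(a+s*c))
      ((0*(a+t*c) - (d*a - c*b)*c)/(a+t*c)^2) t := (hasDerivAt_const t (d*a - c*b)).div hq h.ne'
  have hsum := (hg.const_mul c).add (hdg.mul hk)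
  refine hsum.congr_deriv ?_
  field_simp
  ring

lemma line_convex (x y : ℝ × ℝ) (h : ∀ t : ℝ, x + t • (y - x) ≠ 0) :
    ConvexOn ℝ (Set.univ : Set ℝ) (fun t => Nf (x + t • (y - x))) := by
  set φ : ℝ → ℝ := fun t => Nf (x + t • (y - x)) with hφ
  have key : ∀ t₀ : ℝ, ∃ a b c d : ℝ, 0 < a + t₀*c ∧
      (∀ᶠ t in nhds t₀, φ t = (a+t*c) * g ((b+t*d)/(a+t*c))) := by
    intro t₀
    obtain ⟨L, hm, hev⟩ := loc (h t₀)
    refine ⟨(L x).1, (L x).2, (L (y-x)).1, (L (y-x)).2, ?_, ?_⟩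
    · have hLe : L (x + t₀ • (y - x)) = L x + t₀ • L (y - x) := by
        rw [map_add, map_smul]
      have h1 := hm.1
      rw [hLe] at h1
      simpa using h1
    · have hcont : ContinuousAt (fun t : ℝ => x + t • (y - x)) t₀ := by fun_prop
      filter_upwards [hcont.tendsto.eventually hev] with t ht
      have hLe : L (x + t • (y - x)) = ((L x).1 + t * (L (y-x)).1, (L x).2 + t * (L (y-x)).2) := by
        rw [map_add, map_smul]
        apply Prod.ext <;> simp
      rw [hφ]
      simp only
      rw [ht, hLe, chart]
  have main : ∀ t₀ : ℝ, DifferentiableAt ℝ φ t₀ ∧ DifferentiableAt ℝ (deriv φ) t₀ ∧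
      0 ≤ deriv (deriv φ) t₀ := by
    intro t₀
    obtain ⟨a, b, c, d, hq0, hev⟩ := key t₀
    have hUopen : IsOpen {t : ℝ | 0 < a + t*c} :=
      isOpen_lt continuous_const (by fun_prop)
    have hdφχ : deriv φ =ᶠ[nhds t₀] (fun s => c * g ((b+s*d)/(a+s*c))
        + deriv g ((b+s*d)/(a+s*c)) * ((d*a - c*b)/(a+s*c))) := by
      filter_upwards [hUopen.mem_nhds hq0, eventually_eventually_nhds.2 hev] with t htU hloc
      exact ((psi_deriv a b c d t htU).congr_of_eventuallyEq hloc).deriv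
    have hφd : HasDerivAt φ (c * g ((b+t₀*d)/(a+t₀*c))
        + deriv g ((b+t₀*d)/(a+t₀*c)) * ((d*a - c*b)/(a+t₀*c))) t₀ :=
      (psi_deriv a b c d t₀ hq0).congr_of_eventuallyEq hev
    have hχd := chi_deriv a b c d t₀ hq0
    have h2 : HasDerivAt (deriv φ)
        (deriv (deriv g) ((b+t₀*d)/(a+t₀*c)) * (d*a - c*b)^2 / (a+t₀*c)^3) t₀ :=
      hχd.congr_of_eventuallyEq hdφχ
    refine ⟨hφd.differentiableAt, h2.differentiableAt, ?_⟩
    rw [h2.deriv]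
    exact div_nonneg (mul_nonneg (g2_nonneg _) (sq_nonneg _)) (pow_nonneg hq0.le 3)
  exact convexOn_univ_of_deriv2_nonneg (fun t => (main t).1) (fun t => (main t).2.1)
    (fun t => by
      have := (main t).2.2
      simpa [Function.iterate_succ, Function.iterate_one] using this)
lemma Nf_add_le (x y : ℝ × ℝ) : Nf (x + y) ≤ Nf x + Nf y := by
  rcases eq_or_ne x 0 with rfl | hx
  · simp [Nf_zero]
  rcases eq_or_ne y 0 with rfl | hy
  · simp [Nf_zero]
  by_cases hcol : ∃ s : ℝ, y = s • x
  · obtain ⟨s, rfl⟩ := hcol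
    have h1 : x + s • x = (1 + s) • x := by rw [add_smul, one_smul]
    rw [h1, Nf_smul, Nf_smul]
    have habs : |1 + s| ≤ 1 + |s| := by
      calc |1 + s| ≤ |1| + |s| := abs_add_le 1 s
        _ = 1 + |s| := by rw [abs_one]
    nlinarith [Nf_nonneg x]
  · have hline : ∀ t : ℝ, x + t • (y - x) ≠ 0 := by
      intro t h0
      rcases eq_or_ne t 0 with rfl | ht
      · simp only [zero_smul, add_zero] at h0
        exact hx h0
      · apply hcol
        refine ⟨(t - 1) * t⁻¹, ?_⟩
        have h01 : x.1 + t * (y.1 - x.1) = 0 := by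
          have := congrArg Prod.fst h0
          simpa using this
        have h02 : x.2 + t * (y.2 - x.2) = 0 := by
          have := congrArg Prod.snd h0
          simpa using this
        have e1 : y.1 = (t - 1) * t⁻¹ * x.1 := by field_simp; linarith
        have e2 : y.2 = (t - 1) * t⁻¹ * x.2 := by field_simp; linarith
        have hone : (((t - 1) * t⁻¹) • x) = ((t - 1) * t⁻¹ * x.1, (t - 1) * t⁻¹ * x.2) := rfl
        rw [hone, ← e1, ← e2]
    have hcv := line_convex x y hline
    have hmid := hcv.2 (Set.mem_univ (0:ℝ)) (Set.mem_univ (1:ℝ))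
      (by norm_num : (0:ℝ) ≤ 1/2) (by norm_num : (0:ℝ) ≤ 1/2) (by norm_num)
    have harg : (1/2 : ℝ) • (0:ℝ) + (1/2 : ℝ) • (1:ℝ) = (1/2 : ℝ) := by norm_num
    change Nf (x + ((1/2 : ℝ) • (0:ℝ) + (1/2 : ℝ) • (1:ℝ)) • (y - x)) ≤
      (1/2 : ℝ) • Nf (x + (0:ℝ) • (y - x)) + (1/2 : ℝ) • Nf (x + (1:ℝ) • (y - x)) at hmid
    have hφ0 : x + (0:ℝ) • (y - x) = x := by simp
    have hφ1 : x + (1:ℝ) • (y - x) = y := by simp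
    have hφh : x + (1/2:ℝ) • (y - x) = (1/2 : ℝ) • (x + y) := by
      apply Prod.ext <;> simp <;> ring
    rw [harg, hφ0, hφ1, hφh, Nf_smul, smul_eq_mul, smul_eq_mul,
      abs_of_pos (by norm_num : (0:ℝ) < 1/2)] at hmid
    linarith

end SNP
end

/-- There is a `C^∞`-smooth norm `N` on `ℝ²` which is symmetric under sign change and under
swapping coordinates, and whose unit sphere contains `(1, -1/2)`, `(1, 0)` and `(1, 1/2)`. -/
theorem exists_smooth_symmetric_planar_norm :
    ∃ N : ℝ × ℝ → ℝ, IsNorm N ∧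
      ContDiffOn ℝ (⊤ : ℕ∞) N {(0 : ℝ × ℝ)}ᶜ ∧
      (∀ a b : ℝ, N (-a, b) = N (a, b) ∧ N (a, b) = N (b, a)) ∧
      N (1, -(1 / 2)) = 1 ∧ N (1, 0) = 1 ∧ N (1, 1 / 2) = 1 := by
  refine ⟨SNP.Nf, ⟨SNP.Nf_add_le, SNP.Nf_smul, fun x h => SNP.Nf_eq_zero h⟩, ?_, ?_, ?_, ?_, ?_⟩
  · intro p hp
    exact (SNP.Nf_contDiffAt (by simpa using hp)).contDiffWithinAt
  · intro a b
    exact ⟨SNP.Nf_neg_fst a b, (SNP.Nf_swap a b).symm⟩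
  · exact SNP.Nf_one_t (by norm_num [abs_le])
  · exact SNP.Nf_one_t (by norm_num [abs_le])
  · exact SNP.Nf_one_t (by norm_num [abs_le])
end

section
/- Let (X, ‖·‖) be a real Banach space whose norm is C^k-smooth for k ∈ ℕ ∪ {∞}, let E ⊂ X be a finite-dimensional subspace with a bounded linear projection P : X → E, and let q : X → X/E be the quotient map; suppose the quotient norm ‖·‖_{X/E} is C^k-smooth on X/E. Let N be a norm on ℝ² that is C^∞ on ℝ² ∖ {0}, satisfies N(−a, b) = N(a, b) = N(b, a) for all a, b ∈ ℝ, and has N(1, −1/2) = N(1, 0) = N(1, 1/2) = 1. Then for every a > 0 the formula N_a(x) = N(a·‖P(x)‖, ‖q(x)‖_{X/E}) defines an equivalent norm on X that is C^k-smooth on X ∖ {0} and satisfies N_a(x) ≥ ‖q(x)‖_{X/E} for all x ∈ X. -/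
open Filter Topology

section NLemmas

theorem N_zero {N : ℝ × ℝ → ℝ} (hN : IsNorm N) : N (0, 0) = 0 := by
  have := hN.2.1 0 ((0, 0) : ℝ × ℝ)
  simp at this; exact this

theorem N_neg_snd {N : ℝ × ℝ → ℝ}
    (hsym : ∀ a b : ℝ, N (-a, b) = N (a, b) ∧ N (a, b) = N (b, a))
    (s t : ℝ) : N (s, -t) = N (s, t) := by
  rw [(hsym s (-t)).2, (hsym t s).1, ← (hsym t s).2]

theorem N_convex {N : ℝ × ℝ → ℝ} (hN : IsNorm N)
    (l : ℝ) (hl0 : 0 ≤ l) (hl1 : l ≤ 1) (u w : ℝ × ℝ) :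
    N (l • u + (1 - l) • w) ≤ l * N u + (1 - l) * N w := by
  calc N (l • u + (1 - l) • w) ≤ N (l • u) + N ((1 - l) • w) := hN.1 _ _
    _ = l * N u + (1 - l) * N w := by
        rw [hN.2.1, hN.2.1, abs_of_nonneg hl0, abs_of_nonneg (by linarith)]

theorem N_mono_snd {N : ℝ × ℝ → ℝ} (hN : IsNorm N)
    (hsym : ∀ a b : ℝ, N (-a, b) = N (a, b) ∧ N (a, b) = N (b, a))
    {s t t' : ℝ} (ht : 0 ≤ t) (h : t ≤ t') : N (s, t) ≤ N (s, t') := by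
  have ht' : 0 ≤ t' := ht.trans h
  rcases eq_or_lt_of_le ht' with h0 | h0
  · obtain rfl : t = 0 := le_antisymm (h.trans h0.symm.le) ht
    rw [← h0]
  · set l := (t' + t) / (2 * t') with hl
    have hl0 : 0 ≤ l := by positivity
    have hl1 : l ≤ 1 := by rw [hl, div_le_one (by linarith)]; linarith
    have key : ((s, t) : ℝ × ℝ) = l • ((s, t') : ℝ × ℝ) + (1 - l) • ((s, -t') : ℝ × ℝ) := by
      rw [Prod.smul_mk, Prod.smul_mk, Prod.mk_add_mk, Prod.mk.injEq]
      simp only [smul_eq_mul]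
      constructor
      · ring
      · rw [hl]; field_simp; ring
    calc N (s, t) = N (l • ((s, t') : ℝ × ℝ) + (1 - l) • ((s, -t') : ℝ × ℝ)) := by rw [← key]
      _ ≤ l * N (s, t') + (1 - l) * N (s, -t') := N_convex hN l hl0 hl1 _ _
      _ = N (s, t') := by rw [N_neg_snd hsym]; ring

theorem N_mono_fst {N : ℝ × ℝ → ℝ} (hN : IsNorm N)
    (hsym : ∀ a b : ℝ, N (-a, b) = N (a, b) ∧ N (a, b) = N (b, a))
    {s s' t : ℝ} (hs : 0 ≤ s) (h : s ≤ s') : N (s, t) ≤ N (s', t) := by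
  rw [(hsym s t).2, (hsym s' t).2]
  exact N_mono_snd hN hsym hs h

theorem N_one {N : ℝ × ℝ → ℝ} (hN : IsNorm N)
    (hsym : ∀ a b : ℝ, N (-a, b) = N (a, b) ∧ N (a, b) = N (b, a))
    (hNval : N (1, -(1 / 2)) = 1 ∧ N (1, 0) = 1 ∧ N (1, 1 / 2) = 1)
    {u : ℝ} (hu0 : 0 ≤ u) (hu : u ≤ 1 / 2) : N (1, u) = 1 := by
  refine le_antisymm ?_ ?_
  · have key : ((1, u) : ℝ × ℝ) = (2 * u) • ((1, 1 / 2) : ℝ × ℝ)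
        + (1 - 2 * u) • ((1, 0) : ℝ × ℝ) := by
      rw [Prod.smul_mk, Prod.smul_mk, Prod.mk_add_mk, Prod.mk.injEq]
      simp only [smul_eq_mul]
      constructor <;> ring
    calc N (1, u) ≤ 2 * u * N (1, 1 / 2) + (1 - 2 * u) * N (1, 0) := by
          rw [key]; exact N_convex hN (2 * u) (by linarith) (by linarith) _ _
      _ = 1 := by rw [hNval.2.1, hNval.2.2]; ring
  · calc (1 : ℝ) = N (1, 0) := hNval.2.1.symm
      _ ≤ N (1, u) := N_mono_snd hN hsym le_rfl hu0

theorem N_eq_fst {N : ℝ × ℝ → ℝ} (hN : IsNorm N)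
    (hsym : ∀ a b : ℝ, N (-a, b) = N (a, b) ∧ N (a, b) = N (b, a))
    (hNval : N (1, -(1 / 2)) = 1 ∧ N (1, 0) = 1 ∧ N (1, 1 / 2) = 1)
    {s t : ℝ} (ht0 : 0 ≤ t) (ht : t ≤ s / 2) : N (s, t) = s := by
  rcases eq_or_lt_of_le (by linarith : (0 : ℝ) ≤ s) with hs | hs
  · obtain rfl : t = 0 := le_antisymm (by linarith) ht0
    rw [← hs]; exact N_zero hN
  · have key : ((s, t) : ℝ × ℝ) = s • ((1, t / s) : ℝ × ℝ) := by
      rw [Prod.smul_mk, Prod.mk.injEq]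
      simp only [smul_eq_mul]
      refine ⟨by ring, ?_⟩
      field_simp
    rw [key, hN.2.1, abs_of_pos hs,
      N_one hN hsym hNval (div_nonneg ht0 hs.le)
        (by rw [div_le_div_iff₀ hs (by norm_num)]; linarith),
      mul_one]

theorem N_eq_snd {N : ℝ × ℝ → ℝ} (hN : IsNorm N)
    (hsym : ∀ a b : ℝ, N (-a, b) = N (a, b) ∧ N (a, b) = N (b, a))
    (hNval : N (1, -(1 / 2)) = 1 ∧ N (1, 0) = 1 ∧ N (1, 1 / 2) = 1)
    {s t : ℝ} (hs0 : 0 ≤ s) (hs : s ≤ t / 2) : N (s, t) = t := by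
  rw [(hsym s t).2]; exact N_eq_fst hN hsym hNval hs0 hs

theorem N_ge_fst {N : ℝ × ℝ → ℝ} (hN : IsNorm N)
    (hsym : ∀ a b : ℝ, N (-a, b) = N (a, b) ∧ N (a, b) = N (b, a))
    (hNval : N (1, -(1 / 2)) = 1 ∧ N (1, 0) = 1 ∧ N (1, 1 / 2) = 1)
    {s t : ℝ} (hs : 0 ≤ s) (ht : 0 ≤ t) : s ≤ N (s, t) := by
  calc s = N (s, 0) := (N_eq_fst hN hsym hNval le_rfl (by linarith)).symm
    _ ≤ N (s, t) := N_mono_snd hN hsym le_rfl ht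

theorem N_ge_snd {N : ℝ × ℝ → ℝ} (hN : IsNorm N)
    (hsym : ∀ a b : ℝ, N (-a, b) = N (a, b) ∧ N (a, b) = N (b, a))
    (hNval : N (1, -(1 / 2)) = 1 ∧ N (1, 0) = 1 ∧ N (1, 1 / 2) = 1)
    {s t : ℝ} (hs : 0 ≤ s) (ht : 0 ≤ t) : t ≤ N (s, t) := by
  rw [(hsym s t).2]; exact N_ge_fst hN hsym hNval ht hs

theorem N_le_add {N : ℝ × ℝ → ℝ} (hN : IsNorm N)
    (hsym : ∀ a b : ℝ, N (-a, b) = N (a, b) ∧ N (a, b) = N (b, a))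
    (hNval : N (1, -(1 / 2)) = 1 ∧ N (1, 0) = 1 ∧ N (1, 1 / 2) = 1)
    {s t : ℝ} (hs : 0 ≤ s) (ht : 0 ≤ t) : N (s, t) ≤ s + t := by
  calc N (s, t) = N ((s, 0) + (0, t)) := by norm_num
    _ ≤ N (s, 0) + N (0, t) := hN.1 _ _
    _ = s + t := by
        rw [N_eq_fst hN hsym hNval le_rfl (by linarith),
          N_eq_snd hN hsym hNval le_rfl (by linarith)]

end NLemmas

/-- Combining a smooth planar norm `N` with the projection onto a finite-dimensional subspace
`E` and the quotient norm of `X/E` yields an equivalent `C^k`-smooth norm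
`N_a(x) = N(a‖P x‖, ‖q x‖)` dominating the quotient seminorm. -/
theorem combined_norm_smooth
    {X : Type*} [NormedAddCommGroup X] [NormedSpace ℝ X] [CompleteSpace X]
    (k : ℕ∞)
    (hsmooth : ContDiffOn ℝ k (fun z : X => ‖z‖) {(0 : X)}ᶜ)
    (E : Submodule ℝ X) [FiniteDimensional ℝ E] [IsClosed (E : Set X)]
    (P : X →L[ℝ] X) (hPmem : ∀ z : X, P z ∈ E) (hPid : ∀ e ∈ E, P e = e)
    (hqsmooth : ContDiffOn ℝ k (fun y : X ⧸ E => ‖y‖) {(0 : X ⧸ E)}ᶜ)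
    (N : ℝ × ℝ → ℝ) (hNnorm : IsNorm N)
    (hNsmooth : ContDiffOn ℝ (⊤ : ℕ∞) N {(0 : ℝ × ℝ)}ᶜ)
    (hNsym : ∀ a b : ℝ, N (-a, b) = N (a, b) ∧ N (a, b) = N (b, a))
    (hNval : N (1, -(1 / 2)) = 1 ∧ N (1, 0) = 1 ∧ N (1, 1 / 2) = 1)
    (a : ℝ) (ha : 0 < a) :
    IsNorm (fun z : X => N (a * ‖P z‖, ‖(Submodule.Quotient.mk z : X ⧸ E)‖)) ∧
    IsEquivNorm (fun z : X => N (a * ‖P z‖, ‖(Submodule.Quotient.mk z : X ⧸ E)‖)) ∧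
    ContDiffOn ℝ k (fun z : X => N (a * ‖P z‖, ‖(Submodule.Quotient.mk z : X ⧸ E)‖))
      {(0 : X)}ᶜ ∧
    ∀ z : X, ‖(Submodule.Quotient.mk z : X ⧸ E)‖ ≤
      N (a * ‖P z‖, ‖(Submodule.Quotient.mk z : X ⧸ E)‖) := by
  -- the quotient map as a continuous linear map
  let q : X →L[ℝ] X ⧸ E := LinearMap.mkContinuous E.mkQ 1 (fun x => by
    simpa using Submodule.Quotient.norm_mk_le (S := E) x)
  have hq_eq : ∀ z : X, q z = (Submodule.Quotient.mk z : X ⧸ E) := fun _ => rfl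
  -- vanishing of both components forces the point to vanish
  have hzero : ∀ z : X, P z = 0 → (Submodule.Quotient.mk z : X ⧸ E) = 0 → z = 0 := by
    intro z hP hq
    have hmem : z ∈ E := (Submodule.Quotient.mk_eq_zero E).1 hq
    rw [← hPid z hmem, hP]
  -- smoothness of the two building blocks
  have hq_cd : ∀ z : X, (Submodule.Quotient.mk z : X ⧸ E) ≠ 0 →
      ContDiffAt ℝ k (fun w : X => ‖(Submodule.Quotient.mk w : X ⧸ E)‖) z := by
    intro z hz
    have h1 : ContDiffAt ℝ k (fun y : X ⧸ E => ‖y‖) (q z) :=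
      hqsmooth.contDiffAt (isOpen_compl_singleton.mem_nhds (by simpa [hq_eq] using hz))
    exact h1.comp z (q.contDiff.contDiffAt)
  have hP_cd : ∀ z : X, P z ≠ 0 → ContDiffAt ℝ k (fun w : X => ‖P w‖) z := by
    intro z hz
    have h1 : ContDiffAt ℝ k (fun y : X => ‖y‖) (P z) :=
      hsmooth.contDiffAt (isOpen_compl_singleton.mem_nhds hz)
    exact h1.comp z (P.contDiff.contDiffAt)
  have hxle : ∀ x : X, ‖x‖ ≤ (1 + ‖P‖) * ‖(Submodule.Quotient.mk x : X ⧸ E)‖ + ‖P x‖ := by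
    intro x
    have hP1 : (0 : ℝ) < 1 + ‖P‖ := by positivity
    refine le_of_forall_pos_le_add fun ε hε => ?_
    obtain ⟨m, hm, hmlt⟩ :=
      Submodule.Quotient.norm_mk_lt (Submodule.Quotient.mk x : X ⧸ E) (div_pos hε hP1)
    have hmem : x - m ∈ E := (Submodule.Quotient.eq E).1 hm.symm
    have h2 : ‖x - m‖ ≤ ‖P x‖ + ‖P‖ * ‖m‖ := by
      calc ‖x - m‖ = ‖P x - P m‖ := by rw [← map_sub]; exact congrArg norm (hPid _ hmem).symm
        _ ≤ ‖P x‖ + ‖P m‖ := norm_sub_le _ _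
        _ ≤ ‖P x‖ + ‖P‖ * ‖m‖ := by linarith [P.le_opNorm m]
    have h3 : ‖m‖ < ‖(Submodule.Quotient.mk x : X ⧸ E)‖ + ε / (1 + ‖P‖) := hmlt
    have h4 : ‖x‖ ≤ ‖m‖ + ‖x - m‖ := by
      have := norm_add_le m (x - m); simpa using this
    have h5 : (1 + ‖P‖) * (ε / (1 + ‖P‖)) = ε := by field_simp
    nlinarith [norm_nonneg (P : X →L[ℝ] X), norm_nonneg m,
      mul_le_mul_of_nonneg_left h3.le hP1.le]
    -- goal : ‖x‖ ≤ (1+‖P‖) * ‖mk x‖ + ‖P x‖ + ε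
  refine ⟨⟨?_, ?_, ?_⟩, ?_, ?_, ?_⟩
  · -- triangle inequality
    intro x y
    have h1 : a * ‖P (x + y)‖ ≤ a * ‖P x‖ + a * ‖P y‖ := by
      rw [map_add]
      have := norm_add_le (P x) (P y)
      nlinarith
    have h2 : ‖(Submodule.Quotient.mk (x + y) : X ⧸ E)‖ ≤
        ‖(Submodule.Quotient.mk x : X ⧸ E)‖ + ‖(Submodule.Quotient.mk y : X ⧸ E)‖ := by
      rw [Submodule.Quotient.mk_add]
      exact norm_add_le _ _
    calc N (a * ‖P (x + y)‖, ‖(Submodule.Quotient.mk (x + y) : X ⧸ E)‖)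
        ≤ N (a * ‖P x‖ + a * ‖P y‖, ‖(Submodule.Quotient.mk (x + y) : X ⧸ E)‖) :=
          N_mono_fst hNnorm hNsym (by positivity) h1
      _ ≤ N (a * ‖P x‖ + a * ‖P y‖,
            ‖(Submodule.Quotient.mk x : X ⧸ E)‖ + ‖(Submodule.Quotient.mk y : X ⧸ E)‖) :=
          N_mono_snd hNnorm hNsym (norm_nonneg _) h2
      _ = N ((a * ‖P x‖, ‖(Submodule.Quotient.mk x : X ⧸ E)‖)
            + (a * ‖P y‖, ‖(Submodule.Quotient.mk y : X ⧸ E)‖)) := by rw [Prod.mk_add_mk]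
      _ ≤ _ := hNnorm.1 _ _
  · -- homogeneity
    intro c x
    have h1 : a * ‖P (c • x)‖ = |c| * (a * ‖P x‖) := by
      rw [map_smul, norm_smul, Real.norm_eq_abs]; ring
    have h2 : ‖(Submodule.Quotient.mk (c • x) : X ⧸ E)‖ =
        |c| * ‖(Submodule.Quotient.mk x : X ⧸ E)‖ := by
      rw [Submodule.Quotient.mk_smul, norm_smul, Real.norm_eq_abs]
    show N (a * ‖P (c • x)‖, ‖(Submodule.Quotient.mk (c • x) : X ⧸ E)‖)
      = |c| * N (a * ‖P x‖, ‖(Submodule.Quotient.mk x : X ⧸ E)‖)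
    rw [h1, h2,
      show ((|c| * (a * ‖P x‖), |c| * ‖(Submodule.Quotient.mk x : X ⧸ E)‖) : ℝ × ℝ)
        = |c| • ((a * ‖P x‖, ‖(Submodule.Quotient.mk x : X ⧸ E)‖) : ℝ × ℝ) from rfl,
      hNnorm.2.1, abs_abs]
  · -- definiteness
    intro x hx
    have h0 := hNnorm.2.2 _ hx
    rw [Prod.ext_iff] at h0
    have hP0 : P x = 0 := by
      have : ‖P x‖ = 0 := by
        have := h0.1
        simp only [Prod.fst_zero] at this
        nlinarith [norm_nonneg (P x)]
      exact norm_eq_zero.1 this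
    have hq0 : (Submodule.Quotient.mk x : X ⧸ E) = 0 := by
      have := h0.2
      simp only [Prod.snd_zero] at this
      exact norm_eq_zero.1 this
    exact hzero x hP0 hq0
  · -- equivalence
    refine ⟨min a 1 / (2 * (1 + ‖P‖)), a * ‖P‖ + 1, by positivity, by positivity, fun x => ?_⟩
    have hga : a * ‖P x‖ ≤ N (a * ‖P x‖, ‖(Submodule.Quotient.mk x : X ⧸ E)‖) :=
      N_ge_fst hNnorm hNsym hNval (by positivity) (norm_nonneg _)
    have hgq : ‖(Submodule.Quotient.mk x : X ⧸ E)‖ ≤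
        N (a * ‖P x‖, ‖(Submodule.Quotient.mk x : X ⧸ E)‖) :=
      N_ge_snd hNnorm hNsym hNval (by positivity) (norm_nonneg _)
    constructor
    · rw [div_mul_eq_mul_div, div_le_iff₀ (by positivity)]
      have hm0 : 0 < min a 1 := lt_min ha one_pos
      have hma : min a 1 ≤ a := min_le_left _ _
      have hm1 : min a 1 ≤ 1 := min_le_right _ _
      nlinarith [hxle x, norm_nonneg (P x), norm_nonneg (Submodule.Quotient.mk x : X ⧸ E),
        norm_nonneg x, norm_nonneg (P : X →L[ℝ] X),
        mul_le_mul_of_nonneg_left (hxle x) hm0.le,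
        mul_le_mul_of_nonneg_left hma (norm_nonneg (P x)),
        mul_le_mul_of_nonneg_left hm1 (norm_nonneg (Submodule.Quotient.mk x : X ⧸ E))]
    · have h1 : N (a * ‖P x‖, ‖(Submodule.Quotient.mk x : X ⧸ E)‖)
          ≤ a * ‖P x‖ + ‖(Submodule.Quotient.mk x : X ⧸ E)‖ :=
        N_le_add hNnorm hNsym hNval (by positivity) (norm_nonneg _)
      have h2 := P.le_opNorm x
      have h3 := Submodule.Quotient.norm_mk_le (S := E) x
      nlinarith [norm_nonneg x]
  · -- smoothness
    intro z hz
    have hz0 : z ≠ 0 := hz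
    apply ContDiffAt.contDiffWithinAt
    rcases lt_or_ge (a * ‖P z‖) (‖(Submodule.Quotient.mk z : X ⧸ E)‖ / 2) with hc1 | hc1
    · -- near z the function equals the quotient norm
      have hq0 : (Submodule.Quotient.mk z : X ⧸ E) ≠ 0 := by
        intro h
        rw [h, norm_zero] at hc1
        nlinarith [norm_nonneg (P z)]
      have hU : IsOpen {w : X | a * ‖P w‖ < ‖(Submodule.Quotient.mk w : X ⧸ E)‖ / 2} := by
        have hcont1 : Continuous fun w : X => a * ‖P w‖ := continuous_const.mul P.continuous.norm
        have hcont2 : Continuous fun w : X => ‖(Submodule.Quotient.mk w : X ⧸ E)‖ / 2 :=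
          q.continuous.norm.div_const 2
        exact isOpen_lt hcont1 hcont2
      refine (hq_cd z hq0).congr_of_eventuallyEq ?_
      filter_upwards [hU.mem_nhds hc1] with w hw
      exact N_eq_snd hNnorm hNsym hNval (by positivity) hw.le
    rcases lt_or_ge (‖(Submodule.Quotient.mk z : X ⧸ E)‖) (a * ‖P z‖ / 2) with hc2 | hc2
    · -- near z the function equals `a * ‖P ·‖`
      have hP0 : P z ≠ 0 := by
        intro h
        rw [h, norm_zero, mul_zero] at hc2
        nlinarith [norm_nonneg (Submodule.Quotient.mk z : X ⧸ E)]
      have hU : IsOpen {w : X | ‖(Submodule.Quotient.mk w : X ⧸ E)‖ < a * ‖P w‖ / 2} := by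
        have hcont1 : Continuous fun w : X => ‖(Submodule.Quotient.mk w : X ⧸ E)‖ :=
          q.continuous.norm
        have hcont2 : Continuous fun w : X => a * ‖P w‖ / 2 :=
          (continuous_const.mul P.continuous.norm).div_const 2
        exact isOpen_lt hcont1 hcont2
      have hg : ContDiffAt ℝ k (fun w : X => a * ‖P w‖) z :=
        contDiffAt_const.mul (hP_cd z hP0)
      refine hg.congr_of_eventuallyEq ?_
      filter_upwards [hU.mem_nhds hc2] with w hw
      exact N_eq_fst hNnorm hNsym hNval (norm_nonneg _) hw.le
    · -- both components are nonzero: direct composition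
      have hq0 : (Submodule.Quotient.mk z : X ⧸ E) ≠ 0 := by
        intro h
        rw [h, norm_zero] at hc2
        have hPz : P z = 0 := by
          have : ‖P z‖ ≤ 0 := by nlinarith [norm_nonneg (P z)]
          exact norm_eq_zero.1 (le_antisymm this (norm_nonneg _))
        exact hz0 (hzero z hPz h)
      have hP0 : P z ≠ 0 := by
        intro h
        rw [h, norm_zero, mul_zero] at hc1
        have hqz : (Submodule.Quotient.mk z : X ⧸ E) = 0 := by
          have : ‖(Submodule.Quotient.mk z : X ⧸ E)‖ ≤ 0 := by linarith
          exact norm_eq_zero.1 (le_antisymm this (norm_nonneg _))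
        exact hz0 (hzero z h hqz)
      have hpair : ((a * ‖P z‖, ‖(Submodule.Quotient.mk z : X ⧸ E)‖) : ℝ × ℝ) ≠ 0 := by
        intro h
        have := congrArg Prod.fst h
        simp only [Prod.fst_zero] at this
        exact (mul_pos ha (norm_pos_iff.2 hP0)).ne' this
      have hinner : ContDiffAt ℝ k
          (fun w : X => ((a * ‖P w‖, ‖(Submodule.Quotient.mk w : X ⧸ E)‖) : ℝ × ℝ)) z :=
        (contDiffAt_const.mul (hP_cd z hP0)).prodMk (hq_cd z hq0)
      have houter : ContDiffAt ℝ k N ((a * ‖P z‖, ‖(Submodule.Quotient.mk z : X ⧸ E)‖) : ℝ × ℝ) :=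
        (hNsmooth.contDiffAt (isOpen_compl_singleton.mem_nhds hpair)).of_le (by exact_mod_cast le_top)
      exact houter.comp z hinner
  · -- domination of the quotient norm
    intro z
    exact N_ge_snd hNnorm hNsym hNval (by positivity) (norm_nonneg _)
end

section
/- Let (X, ‖·‖) be a real Banach space, E ⊂ X a finite-dimensional subspace with bounded linear projection P : X → E and quotient map q : X → X/E, and let N be a norm on ℝ² satisfying N(−a, b) = N(a, b) = N(b, a) for all a, b ∈ ℝ and N(1, 0) = 1. For a > 0 let N_a be the norm on X given by N_a(x) = N(a·‖P(x)‖, ‖q(x)‖_{X/E}), and let N_a° ⊂ X* denote its polar unit ball {f ∈ X* : |f(x)| ≤ 1 whenever N_a(x) ≤ 1}. Then the Hausdorff distance (with respect to the dual norm on X*) between N_a° and B_{X*} ∩ E^⊥ tends to 0 as a → 0⁺, where E^⊥ = {f ∈ X* : f(e) = 0 for all e ∈ E} and B_{X*} is the closed unit ball of X*. -/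
open Filter Topology

set_option maxHeartbeats 1000000 in
/-- As `a → 0⁺`, the polar unit balls of the combined norms `N_a(x) = N(a‖P x‖, ‖q x‖)`
converge in Hausdorff distance to `B_{X*} ∩ E^⊥`. -/
theorem polar_of_combined_norm_tendsto
    {X : Type*} [NormedAddCommGroup X] [NormedSpace ℝ X] [CompleteSpace X]
    (E : Submodule ℝ X) [FiniteDimensional ℝ E] [IsClosed (E : Set X)]
    (P : X →L[ℝ] X) (hPmem : ∀ z : X, P z ∈ E) (hPid : ∀ e ∈ E, P e = e)
    (N : ℝ × ℝ → ℝ) (hNnorm : IsNorm N)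
    (hNsym : ∀ a b : ℝ, N (-a, b) = N (a, b) ∧ N (a, b) = N (b, a))
    (hNval : N (1, 0) = 1)
    (Na : ℝ → X → ℝ)
    (hNa : ∀ (a : ℝ) (z : X),
      Na a z = N (a * ‖P z‖, ‖(Submodule.Quotient.mk z : X ⧸ E)‖)) :
    Tendsto (fun a : ℝ =>
        Metric.hausdorffDist
          {f : StrongDual ℝ X | ∀ z : X, Na a z ≤ 1 → |f z| ≤ 1}
          (Metric.closedBall (0 : StrongDual ℝ X) 1 ∩
            {f : StrongDual ℝ X | ∀ e ∈ E, f e = 0}))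
      (𝓝[>] (0 : ℝ)) (𝓝 0) := by
  obtain ⟨hNadd, hNsmul, hNzero⟩ := hNnorm
  -- elementary facts about the norm N on ℝ²
  have hN10 : ∀ t : ℝ, N (t, 0) = |t| := by
    intro t
    have h : ((t : ℝ), (0 : ℝ)) = t • ((1 : ℝ), (0 : ℝ)) := by simp
    rw [h, hNsmul, hNval, mul_one]
  have hN01 : ∀ t : ℝ, N (0, t) = |t| := by
    intro t
    rw [← (hNsym t 0).2, hN10]
  have hNle : ∀ s t : ℝ, N (s, t) ≤ |s| + |t| := by
    intro s t
    have h : ((s : ℝ), (t : ℝ)) = (s, 0) + (0, t) := by simp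
    rw [h]
    calc N ((s, 0) + (0, t)) ≤ N (s, 0) + N (0, t) := hNadd _ _
      _ = |s| + |t| := by rw [hN10, hN01]
  have hsnd : ∀ s t : ℝ, |t| ≤ N (s, t) := by
    intro s t
    have h : ((0 : ℝ), 2 * t) = (s, t) + (-s, t) := by
      simp [Prod.ext_iff]; ring
    have h2 : N (0, 2 * t) ≤ N (s, t) + N (-s, t) := h ▸ hNadd _ _
    rw [hN01, (hNsym s t).1, abs_mul] at h2
    have : |(2 : ℝ)| = 2 := by norm_num
    rw [this] at h2
    linarith
  have hfst : ∀ s t : ℝ, |s| ≤ N (s, t) := by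
    intro s t
    rw [(hNsym s t).2]
    exact hsnd t s
  -- key: functionals vanishing on E are controlled by the quotient norm
  have hkey : ∀ (f : StrongDual ℝ X), (∀ e ∈ E, f e = 0) → ∀ z : X,
      |f z| ≤ ‖f‖ * ‖(Submodule.Quotient.mk z : X ⧸ E)‖ := by
    intro f hf z
    refine le_of_forall_pos_le_add fun ε hε => ?_
    have hε' : 0 < ε / (‖f‖ + 1) := by positivity
    obtain ⟨s, hs, hns⟩ := QuotientAddGroup.exists_norm_add_lt E.toAddSubgroup z hε'
    have hfz : f z = f (z + s) := by
      rw [map_add, hf s hs, add_zero]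
    have h1 : |f z| ≤ ‖f‖ * ‖z + s‖ := by
      rw [hfz]
      calc |f (z + s)| = ‖f (z + s)‖ := (Real.norm_eq_abs _).symm
        _ ≤ ‖f‖ * ‖z + s‖ := f.le_opNorm _
    have hq : ‖QuotientAddGroup.mk' E.toAddSubgroup z‖
        = ‖(Submodule.Quotient.mk z : X ⧸ E)‖ := rfl
    have h2 : ‖f‖ * ‖z + s‖ ≤ ‖f‖ * (‖(Submodule.Quotient.mk z : X ⧸ E)‖ + ε / (‖f‖ + 1)) := by
      apply mul_le_mul_of_nonneg_left _ (norm_nonneg f)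
      rw [← hq]
      exact hns.le
    have h3 : ‖f‖ * (ε / (‖f‖ + 1)) ≤ ε := by
      rw [mul_div_assoc'] at *
      rw [div_le_iff₀ (by positivity)]
      nlinarith [norm_nonneg f, hε.le]
    calc |f z| ≤ ‖f‖ * (‖(Submodule.Quotient.mk z : X ⧸ E)‖ + ε / (‖f‖ + 1)) := h1.trans h2
      _ = ‖f‖ * ‖(Submodule.Quotient.mk z : X ⧸ E)‖ + ‖f‖ * (ε / (‖f‖ + 1)) := by ring
      _ ≤ _ := by linarith
  -- the main Hausdorff distance bound
  have hbound : ∀ a : ℝ, 0 < a →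
      Metric.hausdorffDist
        {f : StrongDual ℝ X | ∀ z : X, Na a z ≤ 1 → |f z| ≤ 1}
        (Metric.closedBall (0 : StrongDual ℝ X) 1 ∩
          {f : StrongDual ℝ X | ∀ e ∈ E, f e = 0}) ≤ 3 * ‖P‖ * a := by
    intro a ha
    apply Metric.hausdorffDist_le_of_mem_dist (by positivity)
    · -- every f in the polar is close to B ∩ E^⊥
      intro f hf
      simp only [Set.mem_setOf_eq] at hf
      -- bound on the full norm of f
      have hfnorm : ‖f‖ ≤ 1 + a * ‖P‖ := by
        refine f.opNorm_le_bound (by positivity) fun z => ?_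
        rcases eq_or_ne z 0 with rfl | hz
        · simp
        · have hzpos : 0 < ‖z‖ := norm_pos_iff.2 hz
          set c : ℝ := ((1 + a * ‖P‖) * ‖z‖)⁻¹ with hc
          have hcpos : 0 < c := by positivity
          have hw : Na a (c • z) ≤ 1 := by
            rw [hNa]
            refine (hNle _ _).trans ?_
            have h1 : ‖P (c • z)‖ = c * ‖P z‖ := by
              rw [map_smul, norm_smul, Real.norm_eq_abs, abs_of_pos hcpos]
            have h2 : ‖(Submodule.Quotient.mk (c • z) : X ⧸ E)‖ = c * ‖(Submodule.Quotient.mk z : X ⧸ E)‖ := by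
              rw [Submodule.Quotient.mk_smul, norm_smul, Real.norm_eq_abs, abs_of_pos hcpos]
            rw [h1, h2]
            have hP1 : ‖P z‖ ≤ ‖P‖ * ‖z‖ := P.le_opNorm z
            have hq1 : ‖(Submodule.Quotient.mk z : X ⧸ E)‖ ≤ ‖z‖ :=
              Submodule.Quotient.norm_mk_le E z
            have e1 : |a * (c * ‖P z‖)| = a * c * ‖P z‖ := by
              rw [abs_of_nonneg]; ring_nf; positivity
            have e2 : |c * ‖(Submodule.Quotient.mk z : X ⧸ E)‖| = c * ‖(Submodule.Quotient.mk z : X ⧸ E)‖ := by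
              rw [abs_of_nonneg]; positivity
            rw [e1, e2]
            have : a * c * ‖P z‖ + c * ‖(Submodule.Quotient.mk z : X ⧸ E)‖
                ≤ c * ((1 + a * ‖P‖) * ‖z‖) := by
              have := mul_le_mul_of_nonneg_left hP1 (by positivity : (0:ℝ) ≤ a * c)
              have := mul_le_mul_of_nonneg_left hq1 hcpos.le
              nlinarith
            refine this.trans ?_
            rw [hc, inv_mul_cancel₀ (by positivity)]
          have := hf _ hw
          have hfc : f (c • z) = c * f z := by rw [map_smul]; rfl
          rw [hfc, abs_mul, abs_of_pos hcpos] at this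
          rw [mul_comm] at this
          have h6 := (le_div_iff₀ hcpos).2 this
          rw [one_div, hc, inv_inv] at h6
          simpa [Real.norm_eq_abs] using h6
      -- bound of f on E
      have hfE : ∀ e ∈ E, |f e| ≤ a * ‖e‖ := by
        intro e he
        rcases eq_or_ne e 0 with rfl | hne
        · simp
        · have hepos : 0 < ‖e‖ := norm_pos_iff.2 hne
          set c : ℝ := (a * ‖e‖)⁻¹ with hc
          have hcpos : 0 < c := by positivity
          have hmem : c • e ∈ E := E.smul_mem c he
          have hw : Na a (c • e) ≤ 1 := by
            rw [hNa]
            have h1 : P (c • e) = c • e := hPid _ hmem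
            have h2 : (Submodule.Quotient.mk (c • e) : X ⧸ E) = 0 :=
              (Submodule.Quotient.mk_eq_zero E).2 hmem
            rw [h1, h2, norm_zero, norm_smul, Real.norm_eq_abs, abs_of_pos hcpos]
            have : a * (c * ‖e‖) = 1 := by
              rw [hc]; field_simp
            rw [this, hNval]
          have := hf _ hw
          have hfc : f (c • e) = c * f e := by rw [map_smul]; rfl
          rw [hfc, abs_mul, abs_of_pos hcpos] at this
          rw [mul_comm] at this
          have h6 := (le_div_iff₀ hcpos).2 this
          rwa [one_div, hc, inv_inv] at h6
      -- the corrected functional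
      have hcomp : ‖f.comp P‖ ≤ a * ‖P‖ := by
        refine ContinuousLinearMap.opNorm_le_bound _ (by positivity) fun z => ?_
        have h1 : |f (P z)| ≤ a * ‖P z‖ := hfE _ (hPmem z)
        have h2 : ‖P z‖ ≤ ‖P‖ * ‖z‖ := P.le_opNorm z
        calc ‖f.comp P z‖ = |f (P z)| := by rfl
          _ ≤ a * ‖P z‖ := h1
          _ ≤ a * (‖P‖ * ‖z‖) := by nlinarith
          _ = a * ‖P‖ * ‖z‖ := by ring
      set g : StrongDual ℝ X := f - f.comp P with hgdef
      have hgE : ∀ e ∈ E, g e = 0 := by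
        intro e he
        have : f (P e) = f e := by rw [hPid e he]
        simp [hgdef, this]
      have hgnorm : ‖g‖ ≤ 1 + 2 * (a * ‖P‖) := by
        calc ‖g‖ ≤ ‖f‖ + ‖f.comp P‖ := norm_sub_le _ _
          _ ≤ (1 + a * ‖P‖) + a * ‖P‖ := add_le_add hfnorm hcomp
          _ = 1 + 2 * (a * ‖P‖) := by ring
      set M : ℝ := max 1 ‖g‖ with hM
      have hM1 : (1 : ℝ) ≤ M := le_max_left _ _
      have hMpos : (0 : ℝ) < M := lt_of_lt_of_le one_pos hM1
      have hgM : ‖g‖ ≤ M := le_max_right _ _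
      have hMle : M ≤ 1 + 2 * (a * ‖P‖) := by
        apply max_le _ hgnorm
        nlinarith [norm_nonneg P, ha.le]
      refine ⟨M⁻¹ • g, ⟨?_, ?_⟩, ?_⟩
      · rw [Metric.mem_closedBall, dist_zero_right, norm_smul, Real.norm_eq_abs,
          abs_of_pos (inv_pos.2 hMpos)]
        calc M⁻¹ * ‖g‖ ≤ M⁻¹ * M := mul_le_mul_of_nonneg_left hgM (by positivity)
          _ = 1 := inv_mul_cancel₀ hMpos.ne'
      · intro e he
        have : (M⁻¹ • g) e = M⁻¹ * g e := rfl
        rw [this, hgE e he, mul_zero]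
      · have hd1 : ‖f - g‖ ≤ a * ‖P‖ := by
          rw [hgdef]; simpa using hcomp
        have hd2 : ‖g - M⁻¹ • g‖ ≤ 2 * (a * ‖P‖) := by
          have he : g - M⁻¹ • g = (1 - M⁻¹) • g := by
            have := sub_smul (1 : ℝ) M⁻¹ g; rw [one_smul] at this; exact this.symm
          rw [he, norm_smul, Real.norm_eq_abs]
          have hMinv : M⁻¹ ≤ 1 := by
            rw [inv_le_one_iff₀]; right; exact hM1
          have h0 : (0 : ℝ) ≤ 1 - M⁻¹ := by linarith
          rw [abs_of_nonneg h0]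
          have : (1 - M⁻¹) * ‖g‖ ≤ (1 - M⁻¹) * M := mul_le_mul_of_nonneg_left hgM h0
          have h2 : (1 - M⁻¹) * M = M - 1 := by
            field_simp
          linarith
        calc dist f (M⁻¹ • g) = ‖f - M⁻¹ • g‖ := dist_eq_norm _ _
          _ ≤ ‖f - g‖ + ‖g - M⁻¹ • g‖ := by
              have : f - M⁻¹ • g = (f - g) + (g - M⁻¹ • g) := by abel
              rw [this]; exact norm_add_le _ _
          _ ≤ a * ‖P‖ + 2 * (a * ‖P‖) := add_le_add hd1 hd2
          _ = 3 * ‖P‖ * a := by ring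
    · -- every g in B ∩ E^⊥ lies in the polar
      intro g hg
      obtain ⟨hg1, hg2⟩ := hg
      refine ⟨g, ?_, by rw [dist_self]; positivity⟩
      intro z hz
      rw [hNa] at hz
      have hq : ‖(Submodule.Quotient.mk z : X ⧸ E)‖ ≤ 1 := by
        have := hsnd (a * ‖P z‖) ‖(Submodule.Quotient.mk z : X ⧸ E)‖
        rw [abs_of_nonneg (norm_nonneg _)] at this
        linarith
      have hgn : ‖g‖ ≤ 1 := by
        rwa [Metric.mem_closedBall, dist_zero_right] at hg1
      calc |g z| ≤ ‖g‖ * ‖(Submodule.Quotient.mk z : X ⧸ E)‖ := hkey g hg2 z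
        _ ≤ 1 * 1 := by
            apply mul_le_mul hgn hq (norm_nonneg _) zero_le_one
        _ = 1 := one_mul 1
  -- squeeze
  have h0 : Tendsto (fun a : ℝ => 3 * ‖P‖ * a) (𝓝[>] (0 : ℝ)) (𝓝 0) := by
    have hcont : Continuous (fun a : ℝ => 3 * ‖P‖ * a) := by fun_prop
    have h := (hcont.tendsto (0 : ℝ)).mono_left
      (nhdsWithin_le_nhds (s := Set.Ioi (0:ℝ)))
    simpa using h
  refine squeeze_zero' ?_ ?_ h0
  · filter_upwards with a using Metric.hausdorffDist_nonneg
  · filter_upwards [self_mem_nhdsWithin] with a ha using hbound a ha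
end

section
/- Let X be a separable real Banach space and let (x_i)_{i∈ℕ} be a sequence in X whose linear span is dense in X; for n ∈ ℕ let M_n = {f ∈ X* : f(x_i) = 0 for all 1 ≤ i ≤ n}. Let F ⊂ X* be weak-* compact, let (g_j)_{j∈ℕ} be a sequence in F, let (n_j) be positive integers with n_j → ∞, let ε > 0, and let (K_j)_{j∈ℕ} be uniformly norm-bounded weak-* compact subsets of X* such that the Hausdorff distance (in dual norm) between K_j and B_{X*} ∩ M_{n_j} tends to 0 as j → ∞. If the set D = ∪_{j∈ℕ} (g_j + ε·K_j) contains F, then D is weak-* compact. -/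
open Filter Topology Pointwise

/-- On a norm-bounded set, the weak-* topology admits convergent sequences to closure points,
thanks to metrizability coming from a dense span. -/
lemma exists_seq_tendsto_of_mem_closure_weakDual
    {X : Type*} [NormedAddCommGroup X] [NormedSpace ℝ X]
    (x : ℕ → X)
    (hdense : closure ((Submodule.span ℝ (Set.range x) : Submodule ℝ X) : Set X) = Set.univ)
    (R : ℝ) {S : Set (WeakDual ℝ X)}
    (hS : S ⊆ WeakDual.toStrongDual ⁻¹' Metric.closedBall 0 R)
    {φ : WeakDual ℝ X} (hφ : φ ∈ closure S) :
    ∃ f : ℕ → WeakDual ℝ X, (∀ m, f m ∈ S) ∧ Tendsto f atTop (𝓝 φ) := by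
  set B' : Set (WeakDual ℝ X) := WeakDual.toStrongDual ⁻¹' Metric.closedBall 0 R with hB'
  have hBcpt : IsCompact B' := WeakDual.isCompact_closedBall (𝕜 := ℝ) (E := X) 0 R
  have hφB : φ ∈ B' := by
    have : closure S ⊆ B' := by
      rw [← hBcpt.isClosed.closure_eq]; exact closure_mono hS
    exact this hφ
  haveI : CompactSpace ↥B' := isCompact_iff_compactSpace.mp hBcpt
  -- the evaluation map into `ℕ → ℝ` is a continuous injection, so `B'` is metrizable
  have hcont : Continuous (fun w : ↥B' => fun i : ℕ => (w : WeakDual ℝ X) (x i)) := by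
    refine continuous_pi fun i => ?_
    exact (WeakDual.eval_continuous (x i)).comp continuous_subtype_val
  have hinj : Function.Injective (fun w : ↥B' => fun i : ℕ => (w : WeakDual ℝ X) (x i)) := by
    intro a b hab
    ext1
    have hd : Dense ((Submodule.span ℝ (Set.range x) : Submodule ℝ X) : Set X) :=
      dense_iff_closure_eq.mpr hdense
    have : ((a : WeakDual ℝ X) : X →L[ℝ] ℝ) = ((b : WeakDual ℝ X) : X →L[ℝ] ℝ) := by
      refine ContinuousLinearMap.ext_on hd ?_
      rintro _ ⟨i, rfl⟩
      exact congrFun hab i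
    exact this
  haveI : TopologicalSpace.MetrizableSpace ↥B' :=
    (hcont.isClosedEmbedding hinj).isEmbedding.metrizableSpace
  set φ' : ↥B' := ⟨φ, hφB⟩ with hφ'
  have hmem : φ' ∈ closure (Subtype.val ⁻¹' S) := by
    rw [closure_subtype]
    have : Subtype.val '' (Subtype.val ⁻¹' S : Set ↥B') = S := by
      rw [Subtype.image_preimage_coe]
      exact Set.inter_eq_self_of_subset_right hS
    rw [this]
    exact hφ
  obtain ⟨ψ, hψmem, hψt⟩ := mem_closure_iff_seq_limit.mp hmem
  exact ⟨fun m => (ψ m : WeakDual ℝ X), hψmem,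
    (continuous_subtype_val.tendsto φ').comp hψt⟩

/-- If `F` is weak-* compact, `g j ∈ F`, `n j → ∞`, and the uniformly bounded weak-* compact
sets `K j` converge in Hausdorff distance to `B_{X*} ∩ M_{n j}`, then the union
`D = ⋃ⱼ (g j + ε K j)`, provided it contains `F`, is weak-* compact. -/
theorem weakStar_compact_union
    {X : Type*} [NormedAddCommGroup X] [NormedSpace ℝ X] [CompleteSpace X]
    [TopologicalSpace.SeparableSpace X]
    (x : ℕ → X)
    (hdense : closure ((Submodule.span ℝ (Set.range x) : Submodule ℝ X) : Set X) = Set.univ)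
    (M : ℕ → Set (StrongDual ℝ X))
    (hM : ∀ n : ℕ, M n = {f : StrongDual ℝ X | ∀ i < n, f (x i) = 0})
    (F : Set (StrongDual ℝ X))
    (hFcpt : IsCompact (StrongDual.toWeakDual '' F))
    (g : ℕ → StrongDual ℝ X) (hg : ∀ j : ℕ, g j ∈ F)
    (n : ℕ → ℕ) (hnpos : ∀ j : ℕ, 0 < n j) (hn : Tendsto n atTop atTop)
    (ε : ℝ) (hε : 0 < ε)
    (K : ℕ → Set (StrongDual ℝ X))
    (hKcpt : ∀ j : ℕ, IsCompact (StrongDual.toWeakDual '' K j))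
    (C : ℝ) (hKbdd : ∀ j : ℕ, K j ⊆ Metric.closedBall 0 C)
    (hKH : Tendsto (fun j : ℕ =>
        Metric.hausdorffDist (K j) (Metric.closedBall (0 : StrongDual ℝ X) 1 ∩ M (n j)))
      atTop (𝓝 0))
    (D : Set (StrongDual ℝ X)) (hD : D = ⋃ j : ℕ, ({g j} + ε • K j))
    (hFD : F ⊆ D) :
    IsCompact (StrongDual.toWeakDual '' D) := by
  -- `F` is norm-bounded, by Banach-Steinhaus
  obtain ⟨Cg, hCg⟩ : ∃ Cg : ℝ, ∀ f ∈ F, ‖f‖ ≤ Cg := by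
    have hpt : ∀ z : X, ∃ Cz : ℝ, ∀ f : ↥F, ‖(f : StrongDual ℝ X) z‖ ≤ Cz := by
      intro z
      have hcpt : IsCompact
          ((fun w : WeakDual ℝ X => w z) '' (StrongDual.toWeakDual '' F)) :=
        hFcpt.image (WeakDual.eval_continuous z)
      obtain ⟨Cz, hCz⟩ := isBounded_iff_forall_norm_le.mp hcpt.isBounded
      exact ⟨Cz, fun f => hCz _ ⟨_, ⟨f.1, f.2, rfl⟩, rfl⟩⟩
    obtain ⟨Cg, hCg⟩ :=
      banach_steinhaus (g := fun f : ↥F => (f : X →L[ℝ] ℝ)) (fun z => hpt z)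
    exact ⟨Cg, fun f hf => hCg ⟨f, hf⟩⟩
  set R : ℝ := Cg + ε * C with hR
  have hDR : ∀ h ∈ D, ‖h‖ ≤ R := by
    intro h hh
    rw [hD] at hh
    obtain ⟨A, ⟨j, rfl⟩, hhA⟩ := hh
    rcases Set.mem_add.mp hhA with ⟨a, ha, b, hb, rfl⟩
    rcases Set.mem_smul_set.mp hb with ⟨k, hk, rfl⟩
    rcases Set.mem_singleton_iff.mp ha with rfl
    have hknorm : ‖k‖ ≤ C := by
      simpa [mem_closedBall_zero_iff] using
        mem_closedBall_zero_iff.mp (hKbdd j hk)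
    calc ‖g j + ε • k‖ ≤ ‖g j‖ + ‖ε • k‖ := norm_add_le _ _
      _ ≤ Cg + ε * C := by
          have : ‖ε • k‖ = ε * ‖k‖ := by
            rw [norm_smul, Real.norm_eq_abs, abs_of_pos hε]
          rw [this]
          exact add_le_add (hCg _ (hg j)) (mul_le_mul_of_nonneg_left hknorm hε.le)
  set S : Set (WeakDual ℝ X) := StrongDual.toWeakDual '' D with hS
  have hSB : S ⊆ WeakDual.toStrongDual ⁻¹' Metric.closedBall 0 R := by
    rintro _ ⟨h, hh, rfl⟩
    simpa [Set.mem_preimage, mem_closedBall_zero_iff] using hDR h hh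
  refine IsCompact.of_isClosed_subset
    (WeakDual.isCompact_closedBall (𝕜 := ℝ) (E := X) 0 R) ?_ hSB
  refine isClosed_of_closure_subset ?_
  intro φ hφ
  obtain ⟨f, hfS, hft⟩ :=
    exists_seq_tendsto_of_mem_closure_weakDual x hdense R hSB hφ
  -- select representations
  have hsel : ∀ m : ℕ, ∃ j k, k ∈ K j ∧ f m = StrongDual.toWeakDual (g j + ε • k) := by
    intro m
    obtain ⟨h, hhD, hfh⟩ := hfS m
    rw [hD] at hhD
    obtain ⟨A, ⟨j, rfl⟩, hhA⟩ := hhD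
    rcases Set.mem_add.mp hhA with ⟨a, ha, b, hb, hab⟩
    rcases Set.mem_smul_set.mp hb with ⟨k, hk, rfl⟩
    rcases Set.mem_singleton_iff.mp ha with rfl
    exact ⟨j, k, hk, by rw [← hfh, ← hab]⟩
  choose jm km hkm hfm using hsel
  by_cases hcase : ∀ N : ℕ, ∀ᶠ m in atTop, N ≤ jm m
  · -- `jm → ∞`
    have htj : Tendsto jm atTop atTop := tendsto_atTop.mpr hcase
    set Sm : ℕ → Set (StrongDual ℝ X) :=
      fun m => Metric.closedBall 0 1 ∩ M (n (jm m)) with hSm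
    have hSm_ne : ∀ m, (Sm m).Nonempty := by
      intro m
      refine ⟨0, ?_, ?_⟩
      · simp
      · rw [hM]; intro i _; simp
    have hedist : ∀ m, EMetric.hausdorffEdist (K (jm m)) (Sm m) ≠ ⊤ := by
      intro m
      exact Metric.hausdorffEdist_ne_top_of_nonempty_of_bounded ⟨km m, hkm m⟩ (hSm_ne m)
        (Metric.isBounded_closedBall.subset (hKbdd _))
        (Metric.isBounded_closedBall.subset Set.inter_subset_left)
    have hinf : Tendsto (fun m => Metric.infDist (km m) (Sm m)) atTop (𝓝 0) := by
      refine squeeze_zero (fun m => Metric.infDist_nonneg) (fun m =>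
        Metric.infDist_le_hausdorffDist_of_mem (hkm m) (hedist m)) ?_
      exact hKH.comp htj
    have hsel2 : ∀ m : ℕ, ∃ u ∈ Sm m,
        dist (km m) u < Metric.infDist (km m) (Sm m) + 1 / (m + 1) := by
      intro m
      refine (Metric.infDist_lt_iff (hSm_ne m)).mp ?_
      have : (0:ℝ) < 1 / (m + 1) := by positivity
      linarith
    choose u hu hdu using hsel2
    have hdist0 : Tendsto (fun m => dist (km m) (u m)) atTop (𝓝 0) := by
      refine squeeze_zero (fun m => dist_nonneg) (fun m => (hdu m).le) ?_
      simpa using hinf.add tendsto_one_div_add_atTop_nhds_zero_nat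
    have hunorm : ∀ m, ‖u m‖ ≤ 1 := fun m =>
      mem_closedBall_zero_iff.mp (hu m).1
    have huM : ∀ m, ∀ i < n (jm m), u m (x i) = 0 := by
      intro m
      have := (hu m).2
      rw [hM] at this
      exact this
    -- `u m → 0` weak-*
    have hu0 : ∀ z : X, Tendsto (fun m => u m z) atTop (𝓝 (0:ℝ)) := by
      intro z
      rw [NormedAddCommGroup.tendsto_nhds_zero]
      intro δ hδ
      have hz : z ∈ closure ((Submodule.span ℝ (Set.range x) : Submodule ℝ X) : Set X) := by
        rw [hdense]; trivial
      obtain ⟨y, hy, hyz⟩ := Metric.mem_closure_iff.mp hz (δ/2) (by positivity)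
      obtain ⟨c, hc⟩ := Finsupp.mem_span_range_iff_exists_finsupp.mp hy
      set N : ℕ := c.support.sup id + 1 with hN
      have hiN : ∀ i ∈ c.support, i < N := fun i hi =>
        Nat.lt_succ_of_le (Finset.le_sup (f := id) hi)
      have hev : ∀ᶠ m in atTop, N ≤ n (jm m) :=
        (hn.comp htj).eventually_ge_atTop N
      filter_upwards [hev] with m hm
      have hy0 : u m y = 0 := by
        rw [← hc, map_finsuppSum, Finsupp.sum]
        refine Finset.sum_eq_zero ?_
        intro i hi
        rw [map_smul, smul_eq_mul, huM m i (lt_of_lt_of_le (hiN i hi) hm), mul_zero]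
      have h1 : ‖u m z‖ = ‖u m (z - y)‖ := by
        rw [map_sub, hy0, sub_zero]
      calc ‖u m z‖ = ‖u m (z - y)‖ := h1
        _ ≤ ‖u m‖ * ‖z - y‖ := (u m).le_opNorm _
        _ ≤ 1 * ‖z - y‖ := by
            exact mul_le_mul_of_nonneg_right (hunorm m) (norm_nonneg _)
        _ < δ := by
            rw [one_mul, ← dist_eq_norm]
            linarith
    -- `km m → 0` weak-*
    have hk0 : ∀ z : X, Tendsto (fun m => km m z) atTop (𝓝 (0:ℝ)) := by
      intro z
      have h1 : Tendsto (fun m => (km m - u m) z) atTop (𝓝 (0:ℝ)) := by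
        refine squeeze_zero_norm (a := fun m => dist (km m) (u m) * ‖z‖) (fun m => ?_) ?_
        · show ‖(km m - u m) z‖ ≤ dist (km m) (u m) * ‖z‖
          rw [dist_eq_norm]
          exact (km m - u m).le_opNorm z
        · simpa using hdist0.mul_const ‖z‖
      have := h1.add (hu0 z)
      simpa [ContinuousLinearMap.sub_apply, sub_add_cancel] using this
    -- pointwise convergence of `g (jm m)` to `φ`
    have hgconv : Tendsto (fun m => StrongDual.toWeakDual (g (jm m))) atTop (𝓝 φ) := by
      rw [tendsto_iff_forall_eval_tendsto_topDualPairing]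
      intro z
      have hfz : Tendsto (fun m => f m z) atTop (𝓝 (φ z)) :=
        ((WeakDual.eval_continuous z).tendsto φ).comp hft
      have key : Tendsto (fun m => f m z - ε * km m z) atTop (𝓝 (φ z)) := by
        have := hfz.sub ((hk0 z).const_mul ε)
        simpa using this
      have final : Tendsto (fun m => g (jm m) z) atTop (𝓝 (φ z)) := by
        refine key.congr fun m => ?_
        have h2 : f m z = g (jm m) z + ε * km m z := by
          rw [hfm m]
          show (g (jm m) + ε • km m) z = _
          rw [ContinuousLinearMap.add_apply, ContinuousLinearMap.smul_apply, smul_eq_mul]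
        rw [h2]; ring
      exact final
    have hφF : φ ∈ StrongDual.toWeakDual '' F := by
      refine hFcpt.isClosed.mem_of_tendsto hgconv ?_
      exact Eventually.of_forall fun m => ⟨g (jm m), hg _, rfl⟩
    obtain ⟨f0, hf0, rfl⟩ := hφF
    exact ⟨f0, hFD hf0, rfl⟩
  · -- some index `j0` occurs infinitely often
    push_neg at hcase
    obtain ⟨N, hN⟩ := hcase
    have hinf' : {m : ℕ | jm m < N}.Infinite := by
      rw [← Nat.frequently_atTop_iff_infinite]
      exact hN
    haveI := hinf'.to_subtype
    obtain ⟨j0, hj0⟩ := Finite.exists_infinite_fiber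
      (fun m : ↥{m : ℕ | jm m < N} => (⟨jm m.1, m.2⟩ : Fin N))
    have hinfj0 : {m : ℕ | jm m = (j0 : ℕ)}.Infinite := by
      rw [← Set.infinite_coe_iff] at *
      refine Infinite.of_injective
        (fun p : ↥((fun m : ↥{m : ℕ | jm m < N} => (⟨jm m.1, m.2⟩ : Fin N)) ⁻¹' {j0}) =>
          (⟨p.1.1, by
            have := p.2
            simp only [Set.mem_preimage, Set.mem_singleton_iff] at this
            have := congrArg Fin.val this
            simpa using this⟩ : ↥{m : ℕ | jm m = (j0 : ℕ)})) ?_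
      intro p q hpq
      have h' := congrArg (fun r : ↥{m : ℕ | jm m = (j0 : ℕ)} => (r : ℕ)) hpq
      simp only at h'
      exact Subtype.ext (Subtype.ext h')
    obtain ⟨ψ, hψmono, hψ⟩ := Filter.extraction_of_frequently_atTop
      (Nat.frequently_atTop_iff_infinite.mpr hinfj0)
    -- the set `toWeakDual '' ({g j0} + ε • K j0)` is compact hence closed
    set A : Set (WeakDual ℝ X) :=
      StrongDual.toWeakDual '' ({g (j0 : ℕ)} + ε • K (j0 : ℕ)) with hA
    have hAeq : A = (fun w : WeakDual ℝ X =>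
        StrongDual.toWeakDual (g (j0 : ℕ)) + ε • w) ''
        (StrongDual.toWeakDual '' K (j0 : ℕ)) := by
      rw [hA, Set.image_image]
      ext w
      constructor
      · rintro ⟨h, hh, rfl⟩
        rcases Set.mem_add.mp hh with ⟨a, ha, b, hb, rfl⟩
        rcases Set.mem_smul_set.mp hb with ⟨k, hk, rfl⟩
        rcases Set.mem_singleton_iff.mp ha with rfl
        exact ⟨k, hk, by simp [map_add, map_smul]⟩
      · rintro ⟨k, hk, rfl⟩
        refine ⟨g (j0 : ℕ) + ε • k, ?_, by simp [map_add, map_smul]⟩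
        exact Set.add_mem_add rfl (Set.smul_mem_smul_set hk)
    have hAcpt : IsCompact A := by
      rw [hAeq]
      refine (hKcpt (j0 : ℕ)).image ?_
      exact continuous_const.add (continuous_id.const_smul ε)
    have htend : Tendsto (fun m => f (ψ m)) atTop (𝓝 φ) :=
      hft.comp hψmono.tendsto_atTop
    have hmemA : ∀ m, f (ψ m) ∈ A := by
      intro m
      rw [hfm (ψ m)]
      refine ⟨g (jm (ψ m)) + ε • km (ψ m), ?_, rfl⟩
      rw [hψ m]
      refine Set.add_mem_add rfl (Set.smul_mem_smul_set ?_)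
      have := hkm (ψ m)
      rwa [hψ m] at this
    have hφA : φ ∈ A :=
      hAcpt.isClosed.mem_of_tendsto htend (Eventually.of_forall hmemA)
    have : A ⊆ S := by
      rw [hA, hS]
      refine Set.image_mono ?_
      rw [hD]
      exact Set.subset_iUnion (fun j => {g j} + ε • K j) (j0 : ℕ)
    exact this hφA
end

section
/- Let X be a real Banach space, let {(x_i, x_i*)}_{i∈ℕ} be an M-basis of X, and for n ∈ ℕ let M_n = {f ∈ X* : f(x_i) = 0 for all 1 ≤ i ≤ n}. Let F ⊂ X* be a bounded weak-* compact set such that {f(x_i) : f ∈ F} is finite for each i ∈ ℕ. Then for every h ∈ F and every n ∈ ℕ the set (h + M_n) ∩ F is both closed and open in F with the relative weak-* topology, and the family {(h + M_n) ∩ F : h ∈ F, n ∈ ℕ} is a base for the relative weak-* topology of F. -/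
open Filter Topology Pointwise

/-- For a bounded weak-* compact set `F` whose evaluations at each `x i` are finite sets, the
traces `(h + M n) ∩ F` are clopen in the relative weak-* topology of `F` and form a base of
that topology. -/
theorem clopen_base_of_weakStar_topology
    {X : Type*} [NormedAddCommGroup X] [NormedSpace ℝ X] [CompleteSpace X]
    (x : ℕ → X) (xs : ℕ → StrongDual ℝ X) (hbasis : IsMBasis x xs)
    (M : ℕ → Set (StrongDual ℝ X))
    (hM : ∀ n : ℕ, M n = {f : StrongDual ℝ X | ∀ i < n, f (x i) = 0})
    (F : Set (StrongDual ℝ X)) (hFbdd : Bornology.IsBounded F)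
    (hFcpt : IsCompact (StrongDual.toWeakDual '' F))
    (hfin : ∀ i : ℕ, ((fun f : StrongDual ℝ X => f (x i)) '' F).Finite) :
    (∀ h ∈ F, ∀ n : ℕ,
      IsClopen (Subtype.val ⁻¹' (StrongDual.toWeakDual '' (({h} + M n) ∩ F)) :
        Set ↥(StrongDual.toWeakDual '' F))) ∧
    TopologicalSpace.IsTopologicalBasis
      {s : Set ↥(StrongDual.toWeakDual '' F) | ∃ h ∈ F, ∃ n : ℕ,
        s = Subtype.val ⁻¹' (StrongDual.toWeakDual '' (({h} + M n) ∩ F))} := by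
  classical
  set T : Set (WeakDual ℝ X) := StrongDual.toWeakDual '' F with hT
  -- membership in `{g} + M n`
  have memadd : ∀ (g f : StrongDual ℝ X) (n : ℕ),
      f ∈ ({g} + M n) ↔ ∀ i < n, f (x i) = g (x i) := by
    intro g f n
    constructor
    · rintro ⟨a, ha, b, hb, rfl⟩ i hi
      rcases Set.mem_singleton_iff.mp ha with rfl
      rw [hM] at hb
      simp [hb i hi]
    · intro hfg
      refine ⟨g, rfl, f - g, ?_, by simp⟩
      rw [hM]
      intro i hi
      simp [hfg i hi]
  -- description of the trace sets
  have key : ∀ g ∈ F, ∀ n : ℕ,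
      (Subtype.val ⁻¹' (StrongDual.toWeakDual '' (({g} + M n) ∩ F)) : Set ↥T)
        = {p : ↥T | ∀ i < n, (p.1 : WeakDual ℝ X) (x i) = g (x i)} := by
    intro g hg n
    ext p
    simp only [Set.mem_preimage, Set.mem_image, Set.mem_inter_iff, Set.mem_setOf_eq]
    constructor
    · rintro ⟨f, ⟨hf1, _⟩, hfp⟩ i hi
      rw [← hfp]
      exact (memadd g f n).mp hf1 i hi
    · intro hp
      obtain ⟨f, hfF, hfp⟩ := p.2
      refine ⟨f, ⟨(memadd g f n).mpr fun i hi => ?_, hfF⟩, hfp⟩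
      have : (p.1 : WeakDual ℝ X) (x i) = g (x i) := hp i hi
      rw [← hfp] at this
      exact this
  -- continuity of evaluation
  have hev : ∀ i : ℕ, Continuous (fun p : ↥T => (p.1 : WeakDual ℝ X) (x i)) :=
    fun i => (WeakDual.eval_continuous (x i)).comp continuous_subtype_val
  -- each single-coordinate level set is clopen
  have hclopen1 : ∀ (c : ℝ) (i : ℕ),
      IsClopen {p : ↥T | (p.1 : WeakDual ℝ X) (x i) = c} := by
    intro c i
    constructor
    · exact isClosed_eq (hev i) continuous_const
    · rw [← isClosed_compl_iff]
      have hcompl : {p : ↥T | (p.1 : WeakDual ℝ X) (x i) = c}ᶜ =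
          (fun p : ↥T => (p.1 : WeakDual ℝ X) (x i)) ⁻¹'
            (((fun f : StrongDual ℝ X => f (x i)) '' F) \ {c}) := by
        ext p
        simp only [Set.mem_compl_iff, Set.mem_setOf_eq, Set.mem_preimage, Set.mem_diff,
          Set.mem_singleton_iff]
        constructor
        · intro hne
          refine ⟨?_, hne⟩
          obtain ⟨f, hfF, hfp⟩ := p.2
          exact ⟨f, hfF, by rw [← hfp]; rfl⟩
        · rintro ⟨_, hne⟩
          exact hne
      rw [hcompl]
      exact (((hfin i).diff : (((fun f : StrongDual ℝ X => f (x i)) '' F) \ {c}).Finite).isClosed).preimage (hev i)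
  -- the trace sets are clopen
  have hclopen : ∀ h ∈ F, ∀ n : ℕ,
      IsClopen (Subtype.val ⁻¹' (StrongDual.toWeakDual '' (({h} + M n) ∩ F)) : Set ↥T) := by
    intro g hg n
    rw [key g hg n]
    have : {p : ↥T | ∀ i < n, (p.1 : WeakDual ℝ X) (x i) = g (x i)} =
        ⋂ i ∈ Finset.range n, {p : ↥T | (p.1 : WeakDual ℝ X) (x i) = g (x i)} := by
      ext p
      simp [Finset.mem_range]
    rw [this]
    exact isClopen_biInter_finset fun i _ => hclopen1 (g (x i)) i
  refine ⟨hclopen, ?_⟩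
  -- the basis property
  apply TopologicalSpace.isTopologicalBasis_of_isOpen_of_nhds
  · rintro u ⟨g, hg, n, rfl⟩
    exact (hclopen g hg n).2
  · intro a u hau hu
    obtain ⟨g, hgF, hga⟩ := a.2
    have hdense : Dense ((Submodule.span ℝ (Set.range x) : Submodule ℝ X) : Set X) := by
      rw [dense_iff_closure_eq]
      exact hbasis.2.1
    have hmain : ∃ n : ℕ,
        {p : ↥T | ∀ i < n, (p.1 : WeakDual ℝ X) (x i) = g (x i)} ⊆ u := by
      by_contra hcon
      push_neg at hcon
      choose q hq1 hq2 using fun n => Set.not_subset.mp (hcon n)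
      simp only [Set.mem_setOf_eq] at hq1
      have : CompactSpace ↥T := isCompact_iff_compactSpace.mp hFcpt
      set C : Set (WeakDual ℝ X) := Subtype.val '' (uᶜ : Set ↥T) with hC
      have hCcpt : IsCompact C :=
        (hu.isClosed_compl.isCompact).image continuous_subtype_val
      have hle : Filter.map (fun n => ((q n : ↥T) : WeakDual ℝ X)) atTop ≤ 𝓟 C := by
        refine Filter.le_principal_iff.mpr ?_
        exact Filter.eventually_map.mpr (Filter.Eventually.of_forall fun n => ⟨q n, hq2 n, rfl⟩)
      obtain ⟨y, hyC, hy⟩ := hCcpt hle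
      -- y agrees with g on every x i
      have hyg : ∀ i, y (x i) = g (x i) := by
        intro i
        have hconst : (fun n => ((q n : ↥T) : WeakDual ℝ X) (x i)) =ᶠ[atTop]
            fun _ => g (x i) := by
          filter_upwards [eventually_ge_atTop (i + 1)] with n hn
          exact hq1 n i (lt_of_lt_of_le (Nat.lt_succ_self i) hn)
        have htend : Tendsto (fun n => ((q n : ↥T) : WeakDual ℝ X) (x i)) atTop
            (𝓝 (g (x i))) := Tendsto.congr' hconst.symm tendsto_const_nhds
        have hcp : ClusterPt (y (x i))
            (Filter.map (fun n => ((q n : ↥T) : WeakDual ℝ X) (x i)) atTop) := by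
          have := hy.map ((WeakDual.eval_continuous (x i)).continuousAt)
            (Filter.tendsto_map (f := fun f : WeakDual ℝ X => f (x i)))
          simpa [Filter.map_map, Function.comp_def] using this
        exact eq_of_nhds_neBot (hcp.mono htend)
      -- hence y = toWeakDual g by density of the span of the x i
      have hyeq : WeakDual.toStrongDual y = g := by
        refine ContinuousLinearMap.ext_on hdense ?_
        rintro z ⟨i, rfl⟩
        exact hyg i
      have hy' : y = StrongDual.toWeakDual g := congrArg StrongDual.toWeakDual hyeq
      obtain ⟨p, hpu, hpy⟩ := hyC
      have : p = a := Subtype.ext (by rw [hpy, hy', hga])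
      rw [this] at hpu
      exact hpu hau
    obtain ⟨n, hn⟩ := hmain
    refine ⟨_, ⟨g, hgF, n, rfl⟩, ?_, ?_⟩
    · rw [key g hgF n]
      intro i hi
      show (a.1 : WeakDual ℝ X) (x i) = g (x i)
      rw [← hga]
      rfl
    · rw [key g hgF n]
      exact hn
end
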